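/- arXiv:1701.06926 — 3 statements merged into one kernel-verified Lean document; each statement's English description precedes it below -/
import Mathlib

section
/- Let x ∈ (0,1) and let s_n be a random variable with density proportional to y^{⌊nx⌋-1}/(1+y)^{n+1} on (0,∞). Let μ_n = ⌊nx⌋/(n-⌊nx⌋) be its mean. Then E[η(s_n/μ_n)] → 0 as n → ∞, where η(y) = y - 1 - log(y). -/
open MeasureTheory Set Filter

lemma aux_int_base : IntegrableOn (fun y : ℝ => ((1+y)^2)⁻¹) (Set.Ioi 0) := by
  have h1 : IntegrableOn (fun u : ℝ => u ^ (-2 : ℝ)) (Set.Ioi 1) :=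
    integrableOn_Ioi_rpow_of_lt (by norm_num) one_pos
  have h2 : IntegrableOn (fun u : ℝ => (u^2)⁻¹) (Set.Ioi 1) := by
    refine h1.congr_fun (fun u hu => ?_) measurableSet_Ioi
    beta_reduce
    rw [show (-2:ℝ) = (-(2:ℝ)) by norm_num, Real.rpow_neg (by linarith [mem_Ioi.mp hu])]
    norm_num [Real.rpow_natCast u 2]
  have hemb : MeasurableEmbedding (fun y : ℝ => 1 + y) :=
    (Homeomorph.addLeft (1:ℝ)).measurableEmbedding
  have hmp : MeasurePreserving (fun y : ℝ => 1 + y) volume volume :=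
    measurePreserving_add_left volume 1
  have := (hmp.integrableOn_comp_preimage hemb (s := Set.Ioi 1)).mpr h2
  have hpre : (fun y : ℝ => 1 + y) ⁻¹' (Set.Ioi 1) = Set.Ioi 0 := by
    ext y; simp [mem_Ioi]
  rw [hpre] at this
  exact this

lemma aux_intOn (a c : ℕ) (h : a + 2 ≤ c) :
    IntegrableOn (fun y : ℝ => y^a/(1+y)^c) (Set.Ioi 0) := by
  refine Integrable.mono aux_int_base ?_ ?_
  · refine (ContinuousOn.div (continuousOn_pow a) ?_ ?_).aestronglyMeasurable measurableSet_Ioi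
    · exact ((continuous_const.add continuous_id).pow c).continuousOn
    · intro y hy
      have : (0:ℝ) < y := hy
      positivity
  · rw [ae_restrict_iff' measurableSet_Ioi]
    refine Filter.Eventually.of_forall (fun y hy => ?_)
    have hy0 : (0:ℝ) < y := hy
    have h1y : (1:ℝ) ≤ 1 + y := by linarith
    rw [Real.norm_eq_abs, Real.norm_eq_abs, abs_of_nonneg (by positivity),
      abs_of_nonneg (by positivity)]
    rw [div_le_iff₀ (by positivity), inv_mul_eq_div, le_div_iff₀ (by positivity)]
    calc y^a * (1+y)^2 ≤ (1+y)^a * (1+y)^2 := by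
          gcongr; linarith
      _ = (1+y)^(a+2) := by ring
      _ ≤ (1+y)^c := pow_le_pow_right₀ h1y h

lemma aux_tendsto_top (a c : ℕ) (h : a + 1 ≤ c) :
    Filter.Tendsto (fun y : ℝ => y^a/(1+y)^c) Filter.atTop (nhds 0) := by
  have hg : Filter.Tendsto (fun y : ℝ => (1+y)⁻¹) Filter.atTop (nhds 0) :=
    tendsto_inv_atTop_zero.comp (tendsto_atTop_add_const_left _ 1 tendsto_id)
  refine squeeze_zero' ?_ ?_ hg
  · filter_upwards [Filter.eventually_ge_atTop (0:ℝ)] with y hy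
    positivity
  · filter_upwards [Filter.eventually_ge_atTop (0:ℝ)] with y hy
    have h1y : (1:ℝ) ≤ 1 + y := by linarith
    rw [div_le_iff₀ (by positivity), inv_mul_eq_div, le_div_iff₀ (by positivity)]
    calc y^a * (1+y) ≤ (1+y)^a * (1+y) := by gcongr; linarith
      _ = (1+y)^(a+1) := by ring
      _ ≤ (1+y)^c := pow_le_pow_right₀ h1y h

lemma aux_deriv (a m : ℕ) (hm : 1 ≤ m) (y : ℝ) (hy : y ∈ Set.Ici (0:ℝ)) :
    HasDerivAt (fun y : ℝ => y^(a+1)/(1+y)^m)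
      ((a+1) * (y^a/(1+y)^m) - m * (y^(a+1)/(1+y)^(m+1))) y := by
  have hy0 : (0:ℝ) ≤ y := hy
  have h1y : (0:ℝ) < 1 + y := by linarith
  have h1 : HasDerivAt (fun y : ℝ => y^(a+1)) ((a+1) * y^a) y := by
    simpa using hasDerivAt_pow (a+1) y
  have h2 : HasDerivAt (fun y : ℝ => (1+y)^m) ((m : ℝ) * (1+y)^(m-1) * 1) y :=
    ((hasDerivAt_id y).const_add 1).pow m
  have h3 := h1.div h2 (by positivity)
  obtain ⟨m', rfl⟩ : ∃ m', m = m'+1 := ⟨m-1, (Nat.succ_pred_eq_of_pos hm).symm⟩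
  simp only [Nat.succ_sub_one] at h3
  refine h3.congr_deriv ?_
  field_simp
  ring

lemma aux_beta (a b : ℕ) :
    ∫ y in Set.Ioi (0:ℝ), y^a/(1+y)^(a+b+2) =
      (a.factorial : ℝ) * b.factorial / (a+b+1).factorial := by
  induction a with
  | zero =>
    have hb1 : ((b:ℝ)+1) ≠ 0 := by positivity
    have hderiv : ∀ y ∈ Set.Ici (0:ℝ), HasDerivAt
        (fun y : ℝ => -(1/((b:ℝ)+1)) * ((1+y)^(b+1))⁻¹)
        (y^0/(1+y)^(0+b+2)) y := by
      intro y hy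
      have hy0 : (0:ℝ) ≤ y := hy
      have h1y : (0:ℝ) < 1 + y := by linarith
      have h2 : HasDerivAt (fun y : ℝ => (1+y)^(b+1)) ((((b:ℕ)+1 : ℕ):ℝ) * (1+y)^b * 1) y := by
        have := ((hasDerivAt_id y).const_add 1).pow (b+1)
        simpa [Pi.pow_def] using this
      have h3 := (h2.inv (by positivity)).const_mul (-(1/((b:ℝ)+1)))
      refine h3.congr_deriv ?_
      push_cast
      field_simp
      ring
    have htend : Filter.Tendsto (fun y : ℝ => -(1/((b:ℝ)+1)) * ((1+y)^(b+1))⁻¹)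
        Filter.atTop (nhds 0) := by
      have h0 := (aux_tendsto_top 0 (b+1) (by omega)).const_mul (-(1/((b:ℝ)+1)))
      rw [mul_zero] at h0
      refine h0.congr (fun y => ?_)
      simp
    have hI := integral_Ioi_of_hasDerivAt_of_tendsto' hderiv
      (aux_intOn 0 (0+b+2) (by omega)) htend
    rw [hI]
    simp [Nat.factorial_succ]
    field_simp
  | succ a ih =>
    have h1 : IntegrableOn (fun y : ℝ => y^a/(1+y)^(a+b+2)) (Set.Ioi 0) :=
      aux_intOn a (a+b+2) (by omega)
    have h2 : IntegrableOn (fun y : ℝ => y^(a+1)/(1+y)^(a+b+2+1)) (Set.Ioi 0) :=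
      aux_intOn (a+1) (a+b+2+1) (by omega)
    have hderiv := aux_deriv a (a+b+2) (by omega)
    have htend : Filter.Tendsto (fun y : ℝ => y^(a+1)/(1+y)^(a+b+2))
        Filter.atTop (nhds 0) := aux_tendsto_top (a+1) (a+b+2) (by omega)
    have hint : IntegrableOn (fun y : ℝ =>
        ((a:ℝ)+1) * (y^a/(1+y)^(a+b+2)) - ((a+b+2:ℕ):ℝ) * (y^(a+1)/(1+y)^(a+b+2+1)))
        (Set.Ioi 0) := (h1.const_mul _).sub (h2.const_mul _)
    have hI := integral_Ioi_of_hasDerivAt_of_tendsto' hderiv hint htend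
    rw [integral_sub (h1.const_mul _) (h2.const_mul _), integral_const_mul _ _,
      integral_const_mul _ _, ih] at hI
    have hzz : (0:ℝ)^(a+1)/(1+(0:ℝ))^(a+b+2) = 0 := by simp
    rw [hzz, zero_sub, neg_zero] at hI
    have hT : ∫ y in Set.Ioi (0:ℝ), y^(a+1)/(1+y)^(a+1+b+2) =
        ∫ y in Set.Ioi (0:ℝ), y^(a+1)/(1+y)^(a+b+2+1) := by
      norm_num [show a+1+b+2 = a+b+2+1 from by omega]
    rw [hT]
    have hm : ((a:ℝ)+(b:ℝ)+2) ≠ 0 := by positivity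
    have hfac : ((a+b+1).factorial : ℝ) ≠ 0 := by
      exact_mod_cast Nat.factorial_ne_zero _
    have h2' : ((a+1+b+1).factorial : ℝ) ≠ 0 := by
      exact_mod_cast Nat.factorial_ne_zero _
    have heq : ∫ y in Set.Ioi (0:ℝ), y^(a+1)/(1+y)^(a+b+2+1) =
        ((a:ℝ)+1) * ((a.factorial : ℝ) * b.factorial / (a+b+1).factorial) / ((a:ℝ)+(b:ℝ)+2) := by
      have : ((a+b+2:ℕ):ℝ) = (a:ℝ)+(b:ℝ)+2 := by push_cast; ring
      rw [this] at hI
      field_simp at hI ⊢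
      linarith [hI]
    rw [heq]
    rw [show a+1+b+1 = (a+b+1)+1 from by omega, Nat.factorial_succ (a+b+1),
      Nat.factorial_succ a]
    push_cast
    rw [mul_div_assoc', div_div, div_eq_div_iff (by positivity) (by positivity)]
    ring

lemma aux_mom (n k : ℕ) (hk : 2 ≤ k) (hkn : k + 2 ≤ n) :
    ((n.factorial : ℝ) / ((k-1).factorial * (n-k).factorial)) *
      (∫ y in Set.Ioi (0:ℝ), y^(k-1)/(1+y)^(n+1)) = 1 ∧
    ((n.factorial : ℝ) / ((k-1).factorial * (n-k).factorial)) *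
      (∫ y in Set.Ioi (0:ℝ), y^k/(1+y)^(n+1)) = (k:ℝ)/((n:ℝ)-(k:ℝ)) ∧
    ((n.factorial : ℝ) / ((k-1).factorial * (n-k).factorial)) *
      (∫ y in Set.Ioi (0:ℝ), y^(k-2)/(1+y)^(n+1)) = ((n:ℝ)-(k:ℝ)+1)/((k:ℝ)-1) := by
  obtain ⟨p, rfl⟩ : ∃ p, k = p + 2 := ⟨k-2, by omega⟩
  obtain ⟨q, rfl⟩ : ∃ q, n = p + q + 4 := ⟨n-p-4, by omega⟩
  rw [show p+2-1 = p+1 from by omega, show p+2-2 = p from by omega,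
    show p+q+4-(p+2) = q+2 from by omega]
  have hb1 := aux_beta (p+1) (q+2)
  have hb2 := aux_beta (p+2) (q+1)
  have hb3 := aux_beta p (q+3)
  rw [show (p+1)+(q+2)+2 = p+q+4+1 from by omega,
    show (p+1)+(q+2)+1 = p+q+4 from by omega] at hb1
  rw [show (p+2)+(q+1)+2 = p+q+4+1 from by omega,
    show (p+2)+(q+1)+1 = p+q+4 from by omega] at hb2
  rw [show p+(q+3)+2 = p+q+4+1 from by omega,
    show p+(q+3)+1 = p+q+4 from by omega] at hb3
  have hfn : ((p+q+4).factorial : ℝ) ≠ 0 := by exact_mod_cast Nat.factorial_ne_zero _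
  have hf1 : (((p+1)).factorial : ℝ) ≠ 0 := by exact_mod_cast Nat.factorial_ne_zero _
  have hf2 : (((q+2)).factorial : ℝ) ≠ 0 := by exact_mod_cast Nat.factorial_ne_zero _
  refine ⟨?_, ?_, ?_⟩
  · rw [hb1]; field_simp
  · rw [hb2, Nat.factorial_succ (p+1), Nat.factorial_succ (q+1)]
    push_cast
    have hq : ((q+1).factorial : ℝ) ≠ 0 := by exact_mod_cast Nat.factorial_ne_zero _
    rw [show ((p:ℝ) + (q:ℝ) + 4 - ((p:ℝ) + 2)) = (q:ℝ)+2 from by ring]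
    have hq2 : ((q:ℝ)+2) ≠ 0 := by positivity
    field_simp
    ring
  · rw [hb3, Nat.factorial_succ (q+2), Nat.factorial_succ p]
    push_cast
    have hp : ((p).factorial : ℝ) ≠ 0 := by exact_mod_cast Nat.factorial_ne_zero _
    rw [show ((p:ℝ) + (q:ℝ) + 4 - ((p:ℝ) + 2) + 1) = (q:ℝ)+3 from by ring,
      show ((p:ℝ) + 2 - 1) = (p:ℝ)+1 from by ring]
    have hp1 : ((p:ℝ)+1) ≠ 0 := by positivity
    field_simp
    ring

set_option maxHeartbeats 2000000 in
theorem expectation_eta_tendsto_zero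
    {Ω : Type*} [MeasureSpace Ω] (P : Measure Ω) [IsProbabilityMeasure P]
    (x : ℝ) (hx : x ∈ Set.Ioo (0 : ℝ) 1) (s : ℕ → Ω → ℝ)
    (hlaw : ∀ n : ℕ, 1 ≤ ⌊(n : ℝ) * x⌋₊ →
      Measure.map (s n) P = (volume : Measure ℝ).withDensity (fun y =>
        if 0 < y then ENNReal.ofReal
          ((n.factorial : ℝ) / (((⌊(n : ℝ) * x⌋₊ - 1).factorial : ℝ) *
              ((n - ⌊(n : ℝ) * x⌋₊).factorial : ℝ)) *
            (y ^ (⌊(n : ℝ) * x⌋₊ - 1) / (1 + y) ^ (n + 1))) else 0)) :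
    Filter.Tendsto
      (fun n : ℕ => ∫ ω,
        (s n ω / ((⌊(n : ℝ) * x⌋₊ : ℝ) / ((n : ℝ) - ⌊(n : ℝ) * x⌋₊)) - 1 -
          Real.log (s n ω / ((⌊(n : ℝ) * x⌋₊ : ℝ) / ((n : ℝ) - ⌊(n : ℝ) * x⌋₊)))) ∂P)
      Filter.atTop (nhds 0) := by
  obtain ⟨hx0, hx1⟩ := hx
  have hg0 : Filter.Tendsto (fun n : ℕ => 3/((1-x)*x*n)) Filter.atTop (nhds 0) := by
    have h1 : Filter.Tendsto (fun n : ℕ => (1-x)*x*(n:ℝ)) Filter.atTop Filter.atTop := by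
      exact Filter.Tendsto.const_mul_atTop (by nlinarith) tendsto_natCast_atTop_atTop
    have h2 := h1.inv_tendsto_atTop
    have h3 := h2.const_mul (3:ℝ)
    rw [mul_zero] at h3
    exact h3.congr (fun n => (div_eq_mul_inv 3 _).symm)
  have hev1 : ∀ᶠ n : ℕ in Filter.atTop, 3 ≤ (n:ℝ)*x := by
    have := (Filter.Tendsto.atTop_mul_const hx0 tendsto_natCast_atTop_atTop
      (r := x)).eventually_ge_atTop 3
    exact this
  have hev2 : ∀ᶠ n : ℕ in Filter.atTop, 2 ≤ (n:ℝ)*(1-x) := by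
    have := (Filter.Tendsto.atTop_mul_const (by linarith) tendsto_natCast_atTop_atTop
      (r := 1-x)).eventually_ge_atTop 2
    exact this
  have key : ∀ᶠ n : ℕ in Filter.atTop,
      0 ≤ (∫ ω, (s n ω / ((⌊(n : ℝ) * x⌋₊ : ℝ) / ((n : ℝ) - ⌊(n : ℝ) * x⌋₊)) - 1 -
          Real.log (s n ω / ((⌊(n : ℝ) * x⌋₊ : ℝ) / ((n : ℝ) - ⌊(n : ℝ) * x⌋₊)))) ∂P) ∧
      (∫ ω, (s n ω / ((⌊(n : ℝ) * x⌋₊ : ℝ) / ((n : ℝ) - ⌊(n : ℝ) * x⌋₊)) - 1 -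
          Real.log (s n ω / ((⌊(n : ℝ) * x⌋₊ : ℝ) / ((n : ℝ) - ⌊(n : ℝ) * x⌋₊)))) ∂P)
        ≤ 3/((1-x)*x*n) := by
    filter_upwards [hev1, hev2] with n hn3 hn2
    set k := ⌊(n:ℝ)*x⌋₊ with hkdef
    have hkx : (k:ℝ) ≤ (n:ℝ)*x := Nat.floor_le (by positivity)
    have hkx' : (n:ℝ)*x < k+1 := Nat.lt_floor_add_one _
    have hk2 : 2 ≤ k := by
      refine Nat.le_floor ?_
      push_cast
      linarith
    have hkn : k + 2 ≤ n := by
      have : (k:ℝ) + 2 ≤ (n:ℝ) := by nlinarith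
      exact_mod_cast this
    have hk1 : 1 ≤ k := by omega
    have hNK : (2:ℝ) ≤ (n:ℝ) - (k:ℝ) := by
      have : ((k:ℝ)+2) ≤ ((n:ℝ)) := by exact_mod_cast hkn
      linarith
    have hK1 : (1:ℝ) ≤ (k:ℝ) - 1 := by
      have : ((2:ℕ):ℝ) ≤ (k:ℝ) := by exact_mod_cast hk2
      push_cast at this; linarith
    set μ : ℝ := (k:ℝ)/((n:ℝ)-(k:ℝ)) with hμdef
    have hμpos : 0 < μ := by
      apply div_pos <;> [positivity; linarith]
    set C : ℝ := (n.factorial : ℝ) / ((k-1).factorial * (n-k).factorial) with hCdef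
    have hCpos : 0 < C := by
      apply div_pos
      · exact_mod_cast Nat.factorial_pos n
      · have h1 : (0:ℝ) < ((k-1).factorial : ℝ) := by exact_mod_cast Nat.factorial_pos _
        have h2 : (0:ℝ) < ((n-k).factorial : ℝ) := by exact_mod_cast Nat.factorial_pos _
        positivity
    set ρ : ℝ → ℝ := fun y => C * (y^(k-1)/(1+y)^(n+1)) with hρdef
    set fnn : ℝ → NNReal := fun y => if 0 < y then Real.toNNReal (ρ y) else 0 with hfdef
    have hfnn_meas : Measurable fnn := by
      refine Measurable.ite measurableSet_Ioi ?_ measurable_const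
      exact (measurable_const.mul ((measurable_id.pow_const _).div
        ((measurable_const.add measurable_id).pow_const _))).real_toNNReal
    have hmap : Measure.map (s n) P =
        (volume : Measure ℝ).withDensity (fun y => (fnn y : ENNReal)) := by
      rw [hlaw n hk1]
      congr 1
      funext y
      by_cases h : 0 < y
      · simp only [hfdef, h, if_true, ENNReal.ofReal]; rfl
      · simp [hfdef, h]
    have hsmul : ∀ g : ℝ → ℝ, (fun y => fnn y • g y) =
        Set.indicator (Set.Ioi 0) (fun y => ρ y * g y) := by
      intro g
      funext y
      by_cases h : 0 < y
      · have hρnn : 0 ≤ ρ y := by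
          have := h.le
          simp only [hρdef]
          positivity
        simp [hfdef, h, Set.indicator_of_mem (Set.mem_Ioi.mpr h), NNReal.smul_def,
          Real.coe_toNNReal _ hρnn]
      · simp [hfdef, h, Set.indicator_of_notMem (fun hc => h (Set.mem_Ioi.mp hc))]
    -- integrability of the basic densities
    have hint1 : IntegrableOn (fun y : ℝ => ρ y * 1) (Set.Ioi 0) volume := by
      refine IntegrableOn.congr_fun ((aux_intOn (k-1) (n+1) (by omega)).const_mul C) ?_
        measurableSet_Ioi
      intro y hy; simp [hρdef]
    have hint2 : IntegrableOn (fun y : ℝ => ρ y * y) (Set.Ioi 0) volume := by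
      refine IntegrableOn.congr_fun ((aux_intOn k (n+1) (by omega)).const_mul C) ?_
        measurableSet_Ioi
      intro y hy
      have hyk : (y:ℝ)^k = y^(k-1)*y := by rw [← pow_succ]; congr 1; omega
      simp only [hρdef]
      rw [hyk]; ring
    have hint3 : IntegrableOn (fun y : ℝ => ρ y * y⁻¹) (Set.Ioi 0) volume := by
      refine IntegrableOn.congr_fun ((aux_intOn (k-2) (n+1) (by omega)).const_mul C) ?_
        measurableSet_Ioi
      intro y hy
      have hy0 : (0:ℝ) < y := hy
      have hyne : y ≠ 0 := ne_of_gt hy0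
      have hyk : (y:ℝ)^(k-1) = y^(k-2)*y := by rw [← pow_succ]; congr 1; omega
      simp only [hρdef]
      rw [hyk]
      field_simp
    -- total mass is 1, so s n is AEMeasurable
    obtain ⟨hm1, hm2, hm3⟩ := aux_mom n k hk2 hkn
    have hTM : (volume : Measure ℝ).withDensity (fun y => (fnn y : ENNReal)) Set.univ = 1 := by
      rw [withDensity_apply _ MeasurableSet.univ, Measure.restrict_univ]
      have : ∀ y : ℝ, (fnn y : ENNReal) = ENNReal.ofReal
          (Set.indicator (Set.Ioi 0) (fun y => ρ y * 1) y) := by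
        intro y
        have := congrFun (hsmul 1) y
        simp only [Pi.one_apply, smul_eq_mul, mul_one] at this
        by_cases h : 0 < y
        · simp only [hfdef, h, if_true, ENNReal.ofReal]
          rw [Set.indicator_of_mem (Set.mem_Ioi.mpr h)]
          simp
        · simp [hfdef, h, Set.indicator_of_notMem (fun hc => h (Set.mem_Ioi.mp hc))]
      simp_rw [this]
      rw [← ofReal_integral_eq_lintegral_ofReal]
      · rw [integral_indicator measurableSet_Ioi]
        have : ∫ y in Set.Ioi (0:ℝ), ρ y * 1 = 1 := by
          calc ∫ y in Set.Ioi (0:ℝ), ρ y * 1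
              = C * ∫ y in Set.Ioi (0:ℝ), y^(k-1)/(1+y)^(n+1) := by
                rw [← integral_const_mul]
                refine setIntegral_congr_fun measurableSet_Ioi (fun y hy => ?_)
                simp [hρdef]
            _ = 1 := hm1
        rw [this]; simp
      · exact (integrable_indicator_iff measurableSet_Ioi).mpr hint1
      · refine Filter.Eventually.of_forall (fun y => ?_)
        by_cases h : 0 < y
        · rw [Set.indicator_of_mem (Set.mem_Ioi.mpr h)]
          have := h.le
          simp only [hρdef]; positivity
        · simp [Set.indicator_of_notMem (fun hc => h (Set.mem_Ioi.mp hc))]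
    have hsae : AEMeasurable (s n) P := by
      by_contra h
      rw [Measure.map_of_not_aemeasurable h] at hmap
      have := hTM
      rw [← hmap] at this
      simp at this
    -- a.e. positivity
    have haepos : ∀ᵐ ω ∂P, 0 < s n ω := by
      have hnull : P ((s n) ⁻¹' (Set.Iic 0)) = 0 := by
        have := Measure.map_apply_of_aemeasurable hsae (measurableSet_Iic (a := (0:ℝ)))
        rw [hmap] at this
        rw [← this]
        rw [withDensity_apply _ measurableSet_Iic]
        rw [setLIntegral_congr_fun_ae measurableSet_Iic
          (Filter.Eventually.of_forall (fun y (hy : y ∈ Set.Iic (0:ℝ)) => ?_))]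
        · exact lintegral_zero
        · show (fnn y : ENNReal) = 0
          have : ¬ 0 < y := not_lt.mpr hy
          simp [hfdef, this]
      rw [ae_iff]
      convert hnull using 2
      ext ω
      simp [not_lt]
    -- transfer of integrals
    have htrans : ∀ g : ℝ → ℝ, Measurable g →
        ∫ ω, g (s n ω) ∂P = ∫ y in Set.Ioi 0, ρ y * g y := by
      intro g hg
      rw [← integral_map hsae hg.aestronglyMeasurable, hmap,
        integral_withDensity_eq_integral_smul hfnn_meas, hsmul g,
        integral_indicator measurableSet_Ioi]
    have hinteg : ∀ g : ℝ → ℝ, Measurable g →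
        IntegrableOn (fun y => ρ y * g y) (Set.Ioi 0) volume →
        Integrable (fun ω => g (s n ω)) P := by
      intro g hg hi
      have h1 : Integrable g ((volume : Measure ℝ).withDensity (fun y => (fnn y : ENNReal))) := by
        rw [integrable_withDensity_iff_integrable_smul hfnn_meas, hsmul g]
        exact (integrable_indicator_iff measurableSet_Ioi).mpr hi
      rw [← hmap] at h1
      exact (integrable_map_measure hg.aestronglyMeasurable hsae).mp h1
    -- moments
    have hEs : ∫ ω, s n ω ∂P = μ := by
      have := htrans (fun y => y) measurable_id
      rw [this]
      calc ∫ y in Set.Ioi (0:ℝ), ρ y * y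
          = C * ∫ y in Set.Ioi (0:ℝ), y^k/(1+y)^(n+1) := by
            rw [← integral_const_mul]
            refine setIntegral_congr_fun measurableSet_Ioi (fun y hy => ?_)
            have hyk : (y:ℝ)^k = y^(k-1)*y := by rw [← pow_succ]; congr 1; omega
            simp only [hρdef]
            rw [hyk]; ring
        _ = μ := hm2
    have hEinv : ∫ ω, (s n ω)⁻¹ ∂P = ((n:ℝ)-(k:ℝ)+1)/((k:ℝ)-1) := by
      have := htrans (fun y => y⁻¹) measurable_inv
      rw [this]
      calc ∫ y in Set.Ioi (0:ℝ), ρ y * y⁻¹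
          = C * ∫ y in Set.Ioi (0:ℝ), y^(k-2)/(1+y)^(n+1) := by
            rw [← integral_const_mul]
            refine setIntegral_congr_fun measurableSet_Ioi (fun y hy => ?_)
            have hy0 : (0:ℝ) < y := hy
            have hyne : y ≠ 0 := ne_of_gt hy0
            have hyk : (y:ℝ)^(k-1) = y^(k-2)*y := by rw [← pow_succ]; congr 1; omega
            simp only [hρdef]
            rw [hyk]
            field_simp
        _ = _ := hm3
    have hIs : Integrable (s n) P := by
      have := hinteg (fun y => y) measurable_id hint2
      exact this
    have hIinv : Integrable (fun ω => (s n ω)⁻¹) P := hinteg (fun y => y⁻¹) measurable_inv hint3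
    -- the dominating function G
    set G : Ω → ℝ := fun ω => (1/μ) * s n ω + μ * (s n ω)⁻¹ - 2 with hGdef
    have hIG : Integrable G P := ((hIs.const_mul (1/μ)).add (hIinv.const_mul μ)).sub
      (integrable_const 2)
    have hEG : ∫ ω, G ω ∂P = (n:ℝ)/(((n:ℝ)-(k:ℝ))*((k:ℝ)-1)) := by
      simp only [hGdef]
      have hI1 : Integrable (fun ω => (1/μ) * s n ω) P := hIs.const_mul (1/μ)
      have hI2 : Integrable (fun ω => μ * (s n ω)⁻¹) P := hIinv.const_mul μ
      have hI12 : Integrable (fun ω => (1/μ) * s n ω + μ * (s n ω)⁻¹) P := hI1.add hI2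
      rw [integral_sub hI12 (integrable_const 2)]
      rw [integral_add hI1 hI2]
      rw [integral_const_mul, integral_const_mul, hEs, hEinv, integral_const]
      simp only [measure_univ, probReal_univ, ENNReal.toReal_one, smul_eq_mul, one_mul]
      rw [hμdef]
      have hNK0 : (n:ℝ)-(k:ℝ) ≠ 0 := by linarith
      have hK0 : (k:ℝ)-1 ≠ 0 := by linarith
      have hk0 : (k:ℝ) ≠ 0 := by positivity
      field_simp
      ring
    -- pointwise bounds
    have hae_lb : ∀ᵐ ω ∂P, 0 ≤ s n ω / μ - 1 - Real.log (s n ω / μ) := by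
      filter_upwards [haepos] with ω hω
      have ht : 0 < s n ω / μ := by positivity
      have := Real.log_le_sub_one_of_pos ht
      linarith
    have hae_ub : ∀ᵐ ω ∂P, s n ω / μ - 1 - Real.log (s n ω / μ) ≤ G ω := by
      filter_upwards [haepos] with ω hω
      have ht : 0 < s n ω / μ := by positivity
      have h1 := Real.log_le_sub_one_of_pos (inv_pos.mpr ht)
      rw [Real.log_inv] at h1
      have h2 : (s n ω / μ)⁻¹ = μ * (s n ω)⁻¹ := by
        rw [inv_div, div_eq_mul_inv]
      have h3 : s n ω / μ = (1/μ) * s n ω := by ring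
      rw [hGdef]
      simp only
      rw [h2] at h1
      nlinarith [h1]
    have hIle : (∫ ω, (s n ω / μ - 1 - Real.log (s n ω / μ)) ∂P) ≤ ∫ ω, G ω ∂P :=
      integral_mono_of_nonneg hae_lb hIG hae_ub
    have hInn : 0 ≤ ∫ ω, (s n ω / μ - 1 - Real.log (s n ω / μ)) ∂P :=
      integral_nonneg_of_ae hae_lb
    -- final numeric bound
    have hbound : (n:ℝ)/(((n:ℝ)-(k:ℝ))*((k:ℝ)-1)) ≤ 3/((1-x)*x*n) := by
      have hn0 : (0:ℝ) < n := by nlinarith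
      have hD : (0:ℝ) < ((n:ℝ)-(k:ℝ))*((k:ℝ)-1) := by nlinarith
      have hB : (0:ℝ) < (1-x)*x*n := by nlinarith
      rw [div_le_div_iff₀ hD hB]
      have hA' : (n:ℝ)*(1-x) ≤ (n:ℝ)-(k:ℝ) := by nlinarith
      have hB' : (n:ℝ)*x - 2 ≤ (k:ℝ)-1 := by nlinarith
      have hBnn : (0:ℝ) ≤ (n:ℝ)*x - 2 := by linarith
      have hAnn : (0:ℝ) ≤ (n:ℝ)-(k:ℝ) := by linarith
      have hprod : ((n:ℝ)*(1-x)) * ((n:ℝ)*x - 2) ≤ ((n:ℝ)-(k:ℝ))*((k:ℝ)-1) :=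
        mul_le_mul hA' hB' hBnn hAnn
      nlinarith [hprod]
    exact ⟨hInn, le_trans hIle (le_trans (le_of_eq hEG) hbound)⟩
  refine squeeze_zero' (key.mono (fun n h => h.1)) (key.mono (fun n h => h.2)) hg0
end

section
/- Let x ∈ (0,1) and m_n be an arbitrary sequence of positive integers. For each n, let s_{n,1}, …, s_{n,m_n} be i.i.d. random variables with density proportional to y^{⌊nx⌋-1}/(1+y)^{n+1} on (0,∞). Then (1/m_n) Σ_{ℓ=1}^{m_n} log(s_{n,ℓ}) converges in probability to log(x/(1-x)) as n → ∞. -/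
set_option maxHeartbeats 1000000

open MeasureTheory ProbabilityTheory Set Filter Real Topology
open scoped ENNReal

-- derivative helper: F y = y^c * ((1+y)^N)⁻¹
lemma hasDerivAt_F (c N : ℕ) (y : ℝ) (hy : (0:ℝ) ≤ y) :
    HasDerivAt (fun y : ℝ => y ^ c * ((1+y)^N)⁻¹)
      ((c:ℝ) * y^(c-1) * ((1+y)^N)⁻¹
        - y^c * ((N:ℝ) * (1+y)^(N-1)) * (((1+y)^N)^2)⁻¹) y := by
  have h1 : (0:ℝ) < 1 + y := by linarith
  have hpow : HasDerivAt (fun y : ℝ => (1+y)^N) ((N:ℝ) * (1+y)^(N-1) * 1) y := by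
    have : HasDerivAt (fun y : ℝ => 1 + y) 1 y := by
      simpa using (hasDerivAt_id y).const_add 1
    exact this.pow N
  have hinv : HasDerivAt (fun y : ℝ => ((1+y)^N)⁻¹)
      (-((N:ℝ) * (1+y)^(N-1) * 1) / ((1+y)^N)^2) y := hpow.inv (by positivity)
  have := (hasDerivAt_pow c y).mul hinv
  refine this.congr_deriv ?_
  field_simp
  ring

lemma tendsto_F_atTop (c N : ℕ) (h : c < N) :
    Tendsto (fun y : ℝ => y ^ c * ((1+y)^N)⁻¹) atTop (nhds 0) := by
  have h1 : Tendsto (fun y : ℝ => ((1+y) ^ (N - c) : ℝ)⁻¹) atTop (nhds 0) := by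
    apply Tendsto.comp tendsto_inv_atTop_zero
    apply Tendsto.comp (tendsto_pow_atTop (n := N - c) (by omega))
    exact tendsto_atTop_add_const_left _ 1 tendsto_id
  apply squeeze_zero_norm' _ h1
  filter_upwards [eventually_ge_atTop (0:ℝ)] with y hy
  have h1y : (0:ℝ) < 1 + y := by linarith
  rw [Real.norm_eq_abs, abs_of_nonneg (by positivity)]
  have hyc : y ^ c ≤ (1+y)^c := pow_le_pow_left₀ hy (by linarith) c
  calc y ^ c * ((1+y)^N)⁻¹ ≤ (1+y)^c * ((1+y)^N)⁻¹ := by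
        apply mul_le_mul_of_nonneg_right hyc (by positivity)
    _ = ((1+y)^(N-c))⁻¹ := by
        have hN : (1+y)^N = (1+y)^c * (1+y)^(N-c) := by rw [← pow_add]; congr 1; omega
        rw [hN, mul_inv, ← mul_assoc, mul_inv_cancel₀ (by positivity), one_mul]

lemma betaJ_integrable (p q : ℕ) :
    IntegrableOn (fun y : ℝ => y ^ p / (1+y)^(p+q+2)) (Ioi 0) := by
  have hdom : IntegrableOn (fun y : ℝ => ((1+y)^2 : ℝ)⁻¹) (Ioi 0) := by
    have := integrableOn_Ioi_deriv_of_nonneg (g := fun y : ℝ => -((1+y) : ℝ)⁻¹)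
      (g' := fun y : ℝ => ((1+y)^2 : ℝ)⁻¹) (a := 0) (l := 0) ?_ ?_ ?_ ?_
    · exact this
    · apply ContinuousWithinAt.neg
      apply ContinuousWithinAt.inv₀ ((continuous_const.add continuous_id).continuousWithinAt) (by norm_num)
    · intro y hy
      have h1 : (0:ℝ) < 1 + y := by simp at hy; linarith
      have := hasDerivAt_F 0 1 y (le_of_lt hy)
      simp only [pow_zero, pow_one, one_mul] at this
      have h2 : HasDerivAt (fun y : ℝ => (1+y)⁻¹) (-(1 * ((1+y)^2)⁻¹)) y := by
        have : HasDerivAt (fun y : ℝ => 1 + y) 1 y := by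
          simpa using (hasDerivAt_id y).const_add 1
        have := this.inv (by positivity)
        refine this.congr_deriv ?_
        field_simp
      have := h2.neg
      refine this.congr_deriv ?_
      ring
    · intro y hy; positivity
    · have : Tendsto (fun y : ℝ => ((1+y) : ℝ)⁻¹) atTop (nhds 0) := by
        apply Tendsto.comp tendsto_inv_atTop_zero
        exact tendsto_atTop_add_const_left _ 1 tendsto_id
      simpa using this.neg
  apply Integrable.mono hdom
  · apply ContinuousOn.aestronglyMeasurable _ measurableSet_Ioi
    apply ContinuousOn.div (by fun_prop) (by fun_prop)
    intro y hy
    have : (0:ℝ) < 1 + y := by simp at hy; linarith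
    positivity
  · rw [ae_restrict_iff' measurableSet_Ioi]
    filter_upwards with y hy
    simp only [mem_Ioi] at hy
    have h1 : (0:ℝ) < 1 + y := by linarith
    rw [Real.norm_eq_abs, Real.norm_eq_abs, abs_of_nonneg (by positivity),
      abs_of_nonneg (by positivity)]
    have hyc : y ^ p ≤ (1+y)^p := pow_le_pow_left₀ hy.le (by linarith) p
    calc y ^ p / (1+y)^(p+q+2) ≤ (1+y)^p / (1+y)^(p+q+2) := by
          apply div_le_div_of_nonneg_right hyc (by positivity) |>.trans_eq rfl
      _ = ((1+y)^(q+2))⁻¹ := by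
          rw [div_eq_iff (by positivity), eq_comm, inv_mul_eq_iff_eq_mul₀ (by positivity),
            ← pow_add]
          congr 1; omega
      _ ≤ ((1+y)^2)⁻¹ := by
          apply inv_anti₀ (by positivity)
          apply pow_le_pow_right₀ (by linarith) (by omega)

lemma betaJ_value (p q : ℕ) :
    ∫ y in Ioi (0:ℝ), y ^ p / (1+y)^(p+q+2)
      = (p.factorial : ℝ) * q.factorial / (p+q+1).factorial := by
  induction p with
  | zero =>
      have key : ∫ y in Ioi (0:ℝ),
          (fun y : ℝ => y ^ 0 / (1+y)^(0+q+2)) y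
          = 0 - (-(((1:ℝ)+0)^(q+1))⁻¹ * ((q:ℝ)+1)⁻¹) := by
        apply integral_Ioi_of_hasDerivAt_of_tendsto
          (f := fun y : ℝ => -((1+y)^(q+1))⁻¹ * ((q:ℝ)+1)⁻¹)
        · apply ContinuousWithinAt.mul _ continuousWithinAt_const
          apply ContinuousWithinAt.neg
          apply ContinuousWithinAt.inv₀
            ((continuous_const.add continuous_id).pow (q+1)).continuousWithinAt (by norm_num)
        · intro y hy
          simp only [mem_Ioi] at hy
          have h1 : (0:ℝ) < 1 + y := by linarith
          have := ((hasDerivAt_F 0 (q+1) y hy.le).neg).mul_const (((q:ℝ)+1)⁻¹)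
          convert this using 1
          · rfl
          · ext z; simp
          · simp only [pow_zero, one_mul, Nat.cast_add, Nat.cast_one, Nat.add_sub_cancel]
            field_simp
            ring
        · exact betaJ_integrable 0 q
        · have := (tendsto_F_atTop 0 (q+1) (by omega)).neg.mul_const (((q:ℝ)+1)⁻¹)
          simpa using this
      rw [key, show (0:ℕ)+q+1 = q+1 from by omega, Nat.factorial_succ]
      push_cast
      norm_num
      rw [eq_div_iff (by positivity)]
      field_simp
  | succ p ih =>
      -- integration by parts: F y = y^{p+1} ((1+y)^{p+q+2})⁻¹
      set N := p + q + 2 with hN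
      have key : ∫ y in Ioi (0:ℝ),
          (fun y : ℝ => ((p:ℝ)+1) * (y ^ p / (1+y)^(p+q+2))
            - (N:ℝ) * (y ^ (p+1) / (1+y)^(p+1+q+2))) y
          = 0 - ((0:ℝ) ^ (p+1) * (((1+0)^N : ℝ))⁻¹) := by
        apply integral_Ioi_of_hasDerivAt_of_tendsto
          (f := fun y : ℝ => y ^ (p+1) * ((1+y)^N)⁻¹)
        · apply ContinuousWithinAt.mul (continuous_pow (p+1)).continuousWithinAt
          apply ContinuousWithinAt.inv₀
            ((continuous_const.add continuous_id).pow N).continuousWithinAt (by norm_num)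
        · intro y hy
          simp only [mem_Ioi] at hy
          have h1 : (0:ℝ) < 1 + y := by linarith
          have := hasDerivAt_F (p+1) N y hy.le
          refine this.congr_deriv ?_
          simp only [Nat.add_sub_cancel, hN]
          push_cast
          rw [show p+1+q+2 = (p+q+2)+1 from by omega]
          field_simp
          ring
        · apply Integrable.sub
          · exact (betaJ_integrable p q).const_mul _
          · have := (betaJ_integrable (p+1) q).const_mul (N:ℝ)
            exact this
        · exact tendsto_F_atTop (p+1) N (by omega)
      have hint1 := (betaJ_integrable p q).const_mul ((p:ℝ)+1)
      have hint2 := (betaJ_integrable (p+1) q).const_mul ((N:ℝ))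
      rw [integral_sub hint1 hint2, integral_const_mul, integral_const_mul, ih] at key
      have hNpos : (0:ℝ) < (N:ℝ) := by positivity
      have h2 : ∫ y in Ioi (0:ℝ), y ^ (p+1) / (1+y)^(p+1+q+2)
          = ((p:ℝ)+1) * ((p.factorial : ℝ) * q.factorial / (p+q+1).factorial) / N := by
        norm_num at key
        field_simp at key ⊢
        linarith [key]
      rw [h2]
      rw [Nat.factorial_succ p, show p+1+q+1 = (p+q+1)+1 from by omega,
        Nat.factorial_succ (p+q+1)]
      have f1 : ((p+q+1).factorial : ℝ) ≠ 0 := by positivity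
      push_cast
      field_simp
      ring
      rw [hN]; push_cast; ring

lemma mass_int (a b : ℕ) :
    IntegrableOn (fun y : ℝ => y^(a+2)/(1+y)^(a+b+6)) (Ioi 0) := by
  have h := betaJ_integrable (a+2) (b+2)
  rw [show (a+2)+(b+2)+2 = a+b+6 from by omega] at h
  exact h

lemma mass_val (a b : ℕ) :
    ∫ y in Ioi (0:ℝ), y^(a+2)/(1+y)^(a+b+6)
      = ((a+2).factorial:ℝ)*((b+2).factorial)/((a+b+5).factorial) := by
  have := betaJ_value (a+2) (b+2)
  rw [show (a+2)+(b+2)+2 = a+b+6 from by omega, show (a+2)+(b+2)+1 = a+b+5 from by omega] at this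
  exact this

lemma intA (a b : ℕ) {r : ℝ} (hr : r ≠ 0) :
    IntegrableOn (fun y : ℝ => (y/r - 1)^2 * (y^(a+2)/(1+y)^(a+b+6))) (Ioi 0) ∧
    ∫ y in Ioi (0:ℝ), (y/r - 1)^2 * (y^(a+2)/(1+y)^(a+b+6))
      = (((a+2).factorial:ℝ)*((b+2).factorial)/((a+b+5).factorial)) *
        ( ((a:ℝ)+3)*((a:ℝ)+4)/(((b:ℝ)+1)*((b:ℝ)+2)*r^2) - 2*((a:ℝ)+3)/(((b:ℝ)+2)*r) + 1 ) := by
  have h1 := betaJ_integrable (a+4) b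
  have h2 := betaJ_integrable (a+3) (b+1)
  have h3 := mass_int a b
  rw [show (a+4)+b+2 = a+b+6 from by omega] at h1
  rw [show (a+3)+(b+1)+2 = a+b+6 from by omega] at h2
  have hint : IntegrableOn (fun y : ℝ =>
      (1/r^2) * (y^(a+4)/(1+y)^(a+b+6)) - (2/r) * (y^(a+3)/(1+y)^(a+b+6))
        + y^(a+2)/(1+y)^(a+b+6)) (Ioi 0) :=
    ((h1.const_mul _).sub (h2.const_mul _)).add h3
  have heq : EqOn (fun y : ℝ => (y/r - 1)^2 * (y^(a+2)/(1+y)^(a+b+6)))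
      (fun y : ℝ =>
      (1/r^2) * (y^(a+4)/(1+y)^(a+b+6)) - (2/r) * (y^(a+3)/(1+y)^(a+b+6))
        + y^(a+2)/(1+y)^(a+b+6)) (Ioi 0) := by
    intro y hy
    simp only [mem_Ioi] at hy
    have hD : ((1+y)^(a+b+6) : ℝ) ≠ 0 := by positivity
    have key : (y/r - 1)^2 * y^(a+2) = 1/r^2 * y^(a+4) - 2/r * y^(a+3) + y^(a+2) := by
      field_simp
      ring
    simp only
    rw [div_eq_mul_inv, div_eq_mul_inv, div_eq_mul_inv, div_eq_mul_inv]
    linear_combination (((1+y)^(a+b+6) : ℝ))⁻¹ * key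
  have hc1 : IntegrableOn (fun y : ℝ => 1/r^2 * (y^(a+4)/(1+y)^(a+b+6))) (Ioi 0) :=
    h1.const_mul _
  have hc2 : IntegrableOn (fun y : ℝ => 2/r * (y^(a+3)/(1+y)^(a+b+6))) (Ioi 0) :=
    h2.const_mul _
  have hsub : IntegrableOn (fun y : ℝ => 1/r^2 * (y^(a+4)/(1+y)^(a+b+6))
      - 2/r * (y^(a+3)/(1+y)^(a+b+6))) (Ioi 0) := hc1.sub hc2
  constructor
  · exact hint.congr_fun heq.symm measurableSet_Ioi
  · rw [setIntegral_congr_fun measurableSet_Ioi heq]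
    rw [integral_add hsub h3, integral_sub hc1 hc2, integral_const_mul, integral_const_mul,
      mass_val a b]
    have v1 := betaJ_value (a+4) b
    have v2 := betaJ_value (a+3) (b+1)
    rw [show (a+4)+b+2 = a+b+6 from by omega, show (a+4)+b+1 = a+b+5 from by omega] at v1
    rw [show (a+3)+(b+1)+2 = a+b+6 from by omega, show (a+3)+(b+1)+1 = a+b+5 from by omega] at v2
    rw [v1, v2]
    have e1 : ((a+4).factorial:ℝ) = ((a:ℝ)+4)*(((a:ℝ)+3)*((a+2).factorial)) := by
      rw [show a+4 = (a+3)+1 from rfl, Nat.factorial_succ, show a+3 = (a+2)+1 from rfl,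
        Nat.factorial_succ]
      push_cast; ring
    have e2 : ((b+2).factorial:ℝ) = ((b:ℝ)+2)*(((b:ℝ)+1)*(b.factorial)) := by
      rw [show b+2 = (b+1)+1 from rfl, Nat.factorial_succ, Nat.factorial_succ]
      push_cast; ring
    have e3 : ((a+3).factorial:ℝ) = ((a:ℝ)+3)*((a+2).factorial) := by
      rw [show a+3 = (a+2)+1 from rfl, Nat.factorial_succ]; push_cast; ring
    have e4 : ((b+1).factorial:ℝ) = ((b:ℝ)+1)*(b.factorial) := by
      rw [Nat.factorial_succ]; push_cast; ring
    rw [e1, e2, e3, e4]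
    have n1 : ((a+2).factorial:ℝ) ≠ 0 := by positivity
    have n2 : ((b).factorial:ℝ) ≠ 0 := by positivity
    have n3 : ((a+b+5).factorial:ℝ) ≠ 0 := by positivity
    have n4 : ((b:ℝ)+1) ≠ 0 := by positivity
    have n5 : ((b:ℝ)+2) ≠ 0 := by positivity
    field_simp
    

lemma intB (a b : ℕ) {r : ℝ} (hr : r ≠ 0) :
    IntegrableOn (fun y : ℝ => (r/y - 1)^2 * (y^(a+2)/(1+y)^(a+b+6))) (Ioi 0) ∧
    ∫ y in Ioi (0:ℝ), (r/y - 1)^2 * (y^(a+2)/(1+y)^(a+b+6))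
      = (((a+2).factorial:ℝ)*((b+2).factorial)/((a+b+5).factorial)) *
        ( r^2*((b:ℝ)+3)*((b:ℝ)+4)/(((a:ℝ)+1)*((a:ℝ)+2)) - 2*r*((b:ℝ)+3)/((a:ℝ)+2) + 1 ) := by
  have h1 := betaJ_integrable a (b+4)
  have h2 := betaJ_integrable (a+1) (b+3)
  have h3 := mass_int a b
  rw [show a+(b+4)+2 = a+b+6 from by omega] at h1
  rw [show (a+1)+(b+3)+2 = a+b+6 from by omega] at h2
  have hint : IntegrableOn (fun y : ℝ =>
      (r^2) * (y^a/(1+y)^(a+b+6)) - (2*r) * (y^(a+1)/(1+y)^(a+b+6))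
        + y^(a+2)/(1+y)^(a+b+6)) (Ioi 0) :=
    ((h1.const_mul _).sub (h2.const_mul _)).add h3
  have heq : EqOn (fun y : ℝ => (r/y - 1)^2 * (y^(a+2)/(1+y)^(a+b+6)))
      (fun y : ℝ =>
      (r^2) * (y^a/(1+y)^(a+b+6)) - (2*r) * (y^(a+1)/(1+y)^(a+b+6))
        + y^(a+2)/(1+y)^(a+b+6)) (Ioi 0) := by
    intro y hy
    simp only [mem_Ioi] at hy
    have hy' : y ≠ 0 := ne_of_gt hy
    have hD : ((1+y)^(a+b+6) : ℝ) ≠ 0 := by positivity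
    have key : (r/y - 1)^2 * y^(a+2) = r^2 * y^a - 2*r * y^(a+1) + y^(a+2) := by
      field_simp
      ring
    simp only
    rw [div_eq_mul_inv, div_eq_mul_inv, div_eq_mul_inv, div_eq_mul_inv]
    linear_combination (((1+y)^(a+b+6) : ℝ))⁻¹ * key
  have hc1 : IntegrableOn (fun y : ℝ => r^2 * (y^a/(1+y)^(a+b+6))) (Ioi 0) :=
    h1.const_mul _
  have hc2 : IntegrableOn (fun y : ℝ => 2*r * (y^(a+1)/(1+y)^(a+b+6))) (Ioi 0) :=
    h2.const_mul _
  have hsub : IntegrableOn (fun y : ℝ => r^2 * (y^a/(1+y)^(a+b+6))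
      - 2*r * (y^(a+1)/(1+y)^(a+b+6))) (Ioi 0) := hc1.sub hc2
  constructor
  · exact hint.congr_fun heq.symm measurableSet_Ioi
  · rw [setIntegral_congr_fun measurableSet_Ioi heq]
    rw [integral_add hsub h3, integral_sub hc1 hc2, integral_const_mul, integral_const_mul,
      mass_val a b]
    have v1 := betaJ_value a (b+4)
    have v2 := betaJ_value (a+1) (b+3)
    rw [show a+(b+4)+2 = a+b+6 from by omega, show a+(b+4)+1 = a+b+5 from by omega] at v1
    rw [show (a+1)+(b+3)+2 = a+b+6 from by omega, show (a+1)+(b+3)+1 = a+b+5 from by omega] at v2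
    rw [v1, v2]
    have e1 : ((b+4).factorial:ℝ) = ((b:ℝ)+4)*(((b:ℝ)+3)*((b+2).factorial)) := by
      rw [show b+4 = (b+3)+1 from rfl, Nat.factorial_succ, show b+3 = (b+2)+1 from rfl,
        Nat.factorial_succ]
      push_cast; ring
    have e2 : ((a+2).factorial:ℝ) = ((a:ℝ)+2)*(((a:ℝ)+1)*(a.factorial)) := by
      rw [show a+2 = (a+1)+1 from rfl, Nat.factorial_succ, Nat.factorial_succ]
      push_cast; ring
    have e3 : ((b+3).factorial:ℝ) = ((b:ℝ)+3)*((b+2).factorial) := by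
      rw [show b+3 = (b+2)+1 from rfl, Nat.factorial_succ]; push_cast; ring
    have e4 : ((a+1).factorial:ℝ) = ((a:ℝ)+1)*(a.factorial) := by
      rw [Nat.factorial_succ]; push_cast; ring
    rw [e1, e3, e4]
    rw [e2]
    have n1 : ((b+2).factorial:ℝ) ≠ 0 := by positivity
    have n2 : ((a).factorial:ℝ) ≠ 0 := by positivity
    have n3 : ((a+b+5).factorial:ℝ) ≠ 0 := by positivity
    have n4 : ((a:ℝ)+1) ≠ 0 := by positivity
    have n5 : ((a:ℝ)+2) ≠ 0 := by positivity
    field_simp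
    

noncomputable def cAux (a b : ℕ) : ℝ :=
  ((a+b+5).factorial : ℝ) / (((a+2).factorial : ℝ) * ((b+2).factorial : ℝ))

noncomputable def gbar (a b : ℕ) (y : ℝ) : ℝ :=
  if 0 < y then cAux a b * (y^(a+2)/(1+y)^(a+b+6)) else 0

noncomputable def Aval (a b : ℕ) (r : ℝ) : ℝ :=
  ((a:ℝ)+3)*((a:ℝ)+4)/(((b:ℝ)+1)*((b:ℝ)+2)*r^2) - 2*((a:ℝ)+3)/(((b:ℝ)+2)*r) + 1

noncomputable def Bval (a b : ℕ) (r : ℝ) : ℝ :=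
  r^2*((b:ℝ)+3)*((b:ℝ)+4)/(((a:ℝ)+1)*((a:ℝ)+2)) - 2*r*((b:ℝ)+3)/((a:ℝ)+2) + 1

lemma cAux_pos (a b : ℕ) : 0 < cAux a b := by
  unfold cAux; positivity

lemma gbar_nonneg (a b : ℕ) (y : ℝ) : 0 ≤ gbar a b y := by
  unfold gbar
  split_ifs with h
  · have h1 : (0:ℝ) < 1 + y := by linarith
    have := cAux_pos a b
    positivity
  · exact le_refl 0

lemma gbar_mul_indicator (a b : ℕ) (φ : ℝ → ℝ) :
    (fun y => φ y * gbar a b y)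
      = (Ioi (0:ℝ)).indicator (fun y => φ y * (cAux a b * (y^(a+2)/(1+y)^(a+b+6)))) := by
  funext y
  simp only [gbar, indicator, mem_Ioi]
  split_ifs <;> simp

lemma integrable_phi_gbar (a b : ℕ) (φ : ℝ → ℝ)
    (h : IntegrableOn (fun y : ℝ => φ y * (y^(a+2)/(1+y)^(a+b+6))) (Ioi 0)) :
    Integrable (fun y => φ y * gbar a b y) := by
  rw [gbar_mul_indicator]
  rw [integrable_indicator_iff measurableSet_Ioi]
  have h2 := h.const_mul (cAux a b)
  exact IntegrableOn.congr_fun h2 (fun y _ => by ring) measurableSet_Ioi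

lemma integral_phi_gbar (a b : ℕ) (φ : ℝ → ℝ) :
    ∫ y, φ y * gbar a b y
      = cAux a b * ∫ y in Ioi (0:ℝ), φ y * (y^(a+2)/(1+y)^(a+b+6)) := by
  rw [gbar_mul_indicator, integral_indicator measurableSet_Ioi, ← integral_const_mul]
  apply setIntegral_congr_fun measurableSet_Ioi
  intro y _; simp only; ring

lemma cAux_mul_mass (a b : ℕ) :
    cAux a b * (((a+2).factorial:ℝ)*((b+2).factorial)/((a+b+5).factorial)) = 1 := by
  unfold cAux
  have n1 : ((a+2).factorial:ℝ) ≠ 0 := by positivity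
  have n2 : ((b+2).factorial:ℝ) ≠ 0 := by positivity
  have n3 : ((a+b+5).factorial:ℝ) ≠ 0 := by positivity
  field_simp

lemma integrable_gbar (a b : ℕ) : Integrable (gbar a b) := by
  have := integrable_phi_gbar a b (fun _ => 1) (by simpa using mass_int a b)
  simpa using this

lemma integral_gbar (a b : ℕ) : ∫ y, gbar a b y = 1 := by
  have := integral_phi_gbar a b (fun _ => 1)
  simp only [one_mul] at this
  rw [this, mass_val, cAux_mul_mass]

lemma integrable_A_gbar (a b : ℕ) {r : ℝ} (hr : r ≠ 0) :
    Integrable (fun y => (y/r - 1)^2 * gbar a b y) :=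
  integrable_phi_gbar a b _ (intA a b hr).1

lemma integral_A_gbar (a b : ℕ) {r : ℝ} (hr : r ≠ 0) :
    ∫ y, (y/r - 1)^2 * gbar a b y = Aval a b r := by
  rw [integral_phi_gbar a b _, (intA a b hr).2, ← mul_assoc, cAux_mul_mass, one_mul, Aval]

lemma integrable_B_gbar (a b : ℕ) {r : ℝ} (hr : r ≠ 0) :
    Integrable (fun y => (r/y - 1)^2 * gbar a b y) :=
  integrable_phi_gbar a b _ (intB a b hr).1

lemma integral_B_gbar (a b : ℕ) {r : ℝ} (hr : r ≠ 0) :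
    ∫ y, (r/y - 1)^2 * gbar a b y = Bval a b r := by
  rw [integral_phi_gbar a b _, (intB a b hr).2, ← mul_assoc, cAux_mul_mass, one_mul, Bval]

lemma Aval_nonneg (a b : ℕ) {r : ℝ} (hr : r ≠ 0) : 0 ≤ Aval a b r := by
  rw [← integral_A_gbar a b hr]
  apply integral_nonneg
  intro y
  exact mul_nonneg (sq_nonneg _) (gbar_nonneg a b y)

lemma Bval_nonneg (a b : ℕ) {r : ℝ} (hr : r ≠ 0) : 0 ≤ Bval a b r := by
  rw [← integral_B_gbar a b hr]
  apply integral_nonneg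
  intro y
  exact mul_nonneg (sq_nonneg _) (gbar_nonneg a b y)

lemma gbar_measurable (a b : ℕ) : Measurable (gbar a b) := by
  unfold gbar
  apply Measurable.ite (measurableSet_lt measurable_const measurable_id)
  · apply Measurable.const_mul
    exact (measurable_id.pow_const _).div ((measurable_const.add measurable_id).pow_const _)
  · exact measurable_const

-- pointwise log bound
lemma log_abs_bound {r y δ : ℝ} (hr : 0 < r) (hy : 0 < y) (hδ : 0 < δ) :
    |Real.log y - Real.log r| ≤ 2*δ + ((y/r-1)^2 + (r/y-1)^2)/δ := by
  have ht : 0 < y / r := div_pos hy hr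
  have h0 : |Real.log y - Real.log r| = |Real.log (y/r)| := by
    rw [Real.log_div (ne_of_gt hy) (ne_of_gt hr)]
  have habs : |Real.log (y/r)| ≤ |y/r - 1| + |r/y - 1| := by
    have hinv : (y/r)⁻¹ = r/y := by field_simp
    rcases le_or_gt 1 (y/r) with h | h
    · rw [abs_of_nonneg (Real.log_nonneg h)]
      have := Real.log_le_sub_one_of_pos ht
      have h2 : |y/r - 1| = y/r - 1 := abs_of_nonneg (by linarith)
      nlinarith [abs_nonneg (r/y - 1)]
    · rw [abs_of_neg (Real.log_neg ht h)]
      have h3 : 0 < r / y := div_pos hr hy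
      have := Real.log_le_sub_one_of_pos h3
      rw [← hinv, Real.log_inv] at this
      have h2 : |r/y - 1| = r/y - 1 := by
        apply abs_of_nonneg
        rw [← hinv]
        have : 1 < (y/r)⁻¹ := (one_lt_inv₀ ht).mpr h
        linarith
      nlinarith [abs_nonneg (y/r - 1)]
  have key : ∀ z : ℝ, |z| ≤ δ + z^2/δ := by
    intro z
    have h1 : 0 ≤ δ^2 + z^2 - δ*|z| := by nlinarith [sq_nonneg (|z| - δ), sq_abs z]
    have h2 : δ + z^2/δ - |z| = (δ^2 + z^2 - δ*|z|)/δ := by field_simp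
    have h3 : 0 ≤ (δ^2 + z^2 - δ*|z|)/δ := div_nonneg h1 hδ.le
    linarith
  have e : ((y/r-1)^2 + (r/y-1)^2)/δ = (y/r-1)^2/δ + (r/y-1)^2/δ := add_div _ _ _
  rw [h0, e]
  have k1 := key (y/r - 1)
  have k2 := key (r/y - 1)
  linarith

lemma regime (x : ℝ) (hx0 : 0 < x) (hx1 : x < 1) :
    ∀ᶠ n : ℕ in atTop, 3 ≤ ⌊(n:ℝ)*x⌋₊ ∧ ⌊(n:ℝ)*x⌋₊ + 2 ≤ n ∧ 1 ≤ n := by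
  obtain ⟨N₁, hN₁⟩ := exists_nat_ge (4/x)
  obtain ⟨N₂, hN₂⟩ := exists_nat_ge (2/(1-x))
  filter_upwards [eventually_ge_atTop (max (max N₁ N₂) 1)] with n hn
  have hn1 : N₁ ≤ n := le_trans (le_max_left _ _ |>.trans (le_max_left _ _)) hn
  have hn2 : N₂ ≤ n := le_trans (le_max_right _ _ |>.trans (le_max_left _ _)) hn
  have hn3 : 1 ≤ n := le_trans (le_max_right _ _) hn
  have hnr1 : (4:ℝ)/x ≤ (n:ℝ) := hN₁.trans (by exact_mod_cast hn1)
  have hnr2 : (2:ℝ)/(1-x) ≤ (n:ℝ) := hN₂.trans (by exact_mod_cast hn2)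
  have h4 : (4:ℝ) ≤ (n:ℝ)*x := by
    rw [div_le_iff₀ hx0] at hnr1; linarith
  have h2 : (2:ℝ) ≤ (n:ℝ)*(1-x) := by
    rw [div_le_iff₀ (by linarith : (0:ℝ) < 1-x)] at hnr2; linarith
  refine ⟨?_, ?_, hn3⟩
  · apply Nat.le_floor
    push_cast
    linarith
  · have hfl : ((⌊(n:ℝ)*x⌋₊ : ℝ)) ≤ (n:ℝ)*x := Nat.floor_le (by positivity)
    have : ((⌊(n:ℝ)*x⌋₊ : ℝ)) + 2 ≤ (n:ℝ) := by nlinarith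
    exact_mod_cast this

lemma tendsto_C (x : ℝ) (hx0 : 0 < x) (hx1 : x < 1) :
    Tendsto (fun n : ℕ =>
      Aval (⌊(n:ℝ)*x⌋₊ - 3) (n - ⌊(n:ℝ)*x⌋₊ - 2) (x/(1-x))
        + Bval (⌊(n:ℝ)*x⌋₊ - 3) (n - ⌊(n:ℝ)*x⌋₊ - 2) (x/(1-x))) atTop (𝓝 0) := by
  set r : ℝ := x/(1-x) with hrdef
  have hx1' : (0:ℝ) < 1 - x := by linarith
  have hr : 0 < r := div_pos hx0 hx1'
  set u : ℕ → ℝ := fun n => (⌊(n:ℝ)*x⌋₊ : ℝ)/(n:ℝ) with hu_def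
  set v : ℕ → ℝ := fun n => ((n:ℝ))⁻¹ with hv_def
  have hu : Tendsto u atTop (𝓝 x) := by
    have h := tendsto_nat_floor_mul_div_atTop (R := ℝ) hx0.le
    have h2 := h.comp (tendsto_natCast_atTop_atTop (R := ℝ))
    apply h2.congr
    intro n
    simp [Function.comp, hu_def, mul_comm]
  have hv : Tendsto v atTop (𝓝 0) := tendsto_inv_atTop_zero.comp tendsto_natCast_atTop_atTop
  -- smooth sequence
  set G : ℕ → ℝ := fun n =>
    (u n*(u n+v n))/((1-u n-v n)*((1-u n)*r^2)) - 2*(u n)/((1-u n)*r) + 1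
    + (r^2*((1-u n+v n)*(1-u n+2*v n))/((u n-2*v n)*(u n-v n))
       - 2*r*(1-u n+v n)/(u n-v n) + 1) with hG_def
  have hG : Tendsto G atTop (𝓝 ((x*(x+0))/((1-x-0)*((1-x)*r^2)) - 2*x/((1-x)*r) + 1
      + (r^2*((1-x+0)*(1-x+2*0))/((x-2*0)*(x-0)) - 2*r*(1-x+0)/(x-0) + 1))) := by
    have d1 : (1-x-0)*((1-x)*r^2) ≠ 0 := by
      have hr2 : (0:ℝ) < r^2 := by positivity
      have e : (1-x-0)*((1-x)*r^2) = (1-x)*((1-x)*r^2) := by ring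
      rw [e]
      exact ne_of_gt (mul_pos hx1' (mul_pos hx1' hr2))
    have d2 : (1-x)*r ≠ 0 := ne_of_gt (mul_pos hx1' hr)
    have d3 : (x-2*0)*(x-0) ≠ 0 := by simp; positivity
    have d4 : (x-0) ≠ 0 := by simp; positivity
    have t1u : Tendsto (fun n => 1 - u n) atTop (𝓝 (1-x)) := tendsto_const_nhds.sub hu
    have t1uv : Tendsto (fun n => 1 - u n - v n) atTop (𝓝 (1-x-0)) := t1u.sub hv
    refine Tendsto.add (Tendsto.add (Tendsto.sub ?_ ?_) tendsto_const_nhds)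
      (Tendsto.add (Tendsto.sub ?_ ?_) tendsto_const_nhds)
    · exact Tendsto.div (hu.mul (hu.add hv)) (t1uv.mul (t1u.mul tendsto_const_nhds)) d1
    · exact Tendsto.div (tendsto_const_nhds.mul hu) (t1u.mul tendsto_const_nhds) d2
    · refine Tendsto.div (tendsto_const_nhds.mul (((t1u.add hv)).mul
        (t1u.add (tendsto_const_nhds.mul hv)))) ?_ d3
      exact (hu.sub (tendsto_const_nhds.mul hv)).mul (hu.sub hv)
    · exact Tendsto.div (tendsto_const_nhds.mul (t1u.add hv)) (hu.sub hv) d4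
  have hval : (x*(x+0))/((1-x-0)*((1-x)*r^2)) - 2*x/((1-x)*r) + 1
      + (r^2*((1-x+0)*(1-x+2*0))/((x-2*0)*(x-0)) - 2*r*(1-x+0)/(x-0) + 1) = 0 := by
    rw [hrdef]
    have hx0' : x ≠ 0 := hx0.ne'
    have hx1'' : 1 - x ≠ 0 := hx1'.ne'
    simp only [add_zero, sub_zero, mul_zero]
    field_simp
    ring
  rw [hval] at hG
  -- eventual equality
  apply hG.congr'
  filter_upwards [regime x hx0 hx1] with n hn
  obtain ⟨h3, hk2, hn1⟩ := hn
  set k := ⌊(n:ℝ)*x⌋₊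
  have hnn : (1:ℝ) ≤ (n:ℝ) := by exact_mod_cast hn1
  have hkr : (3:ℝ) ≤ (k:ℝ) := by exact_mod_cast h3
  have hnk : (k:ℝ) + 2 ≤ (n:ℝ) := by exact_mod_cast hk2
  have ca : ((k - 3 : ℕ):ℝ) = (k:ℝ) - 3 := by
    rw [Nat.cast_sub h3]; norm_num
  have cb : ((n - k - 2 : ℕ):ℝ) = (n:ℝ) - (k:ℝ) - 2 := by
    rw [Nat.cast_sub (by omega), Nat.cast_sub (by omega)]; norm_num
  have hnr0 : (n:ℝ) ≠ 0 := by linarith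
  have e_u : u n = (k:ℝ)/(n:ℝ) := rfl
  have e_v : v n = ((n:ℝ))⁻¹ := rfl
  have dk1 : (n:ℝ) - (k:ℝ) - 1 ≠ 0 := by linarith
  have dk2 : (n:ℝ) - (k:ℝ) ≠ 0 := by linarith
  have dk3 : (k:ℝ) - 1 ≠ 0 := by linarith
  have dk4 : (k:ℝ) - 2 ≠ 0 := by linarith
  have hrne : r ≠ 0 := ne_of_gt hr
  have hnpos : (0:ℝ) < (n:ℝ) := by linarith
  have hninv : (0:ℝ) < ((n:ℝ))⁻¹ := by positivity
  have hcancel : (n:ℝ) * ((n:ℝ))⁻¹ = 1 := mul_inv_cancel₀ hnr0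
  have t1 : u n * (u n + v n) / ((1 - u n - v n) * ((1 - u n) * r ^ 2))
      = (k:ℝ)*((k:ℝ)+1)/((((n:ℝ)-(k:ℝ)-1)*((n:ℝ)-(k:ℝ)))*r^2) := by
    rw [e_u, e_v]
    rw [div_eq_div_iff]
    · field_simp
      try ring
    · apply ne_of_gt
      have h1 : 0 < 1 - (k:ℝ)/(n:ℝ) - ((n:ℝ))⁻¹ := by
        rw [div_eq_mul_inv]
        nlinarith [mul_pos hninv (show (0:ℝ) < (n:ℝ)-(k:ℝ)-1 by linarith)]
      have h2 : 0 < 1 - (k:ℝ)/(n:ℝ) := by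
        rw [div_eq_mul_inv]
        nlinarith [mul_pos hninv (show (0:ℝ) < (n:ℝ)-(k:ℝ) by linarith)]
      have h3 : 0 < r^2 := by positivity
      positivity
    · apply ne_of_gt
      have h1 : 0 < (n:ℝ)-(k:ℝ)-1 := by linarith
      have h2 : 0 < (n:ℝ)-(k:ℝ) := by linarith
      have h3 : 0 < r^2 := by positivity
      positivity
  have t2 : 2*(u n)/((1-u n)*r) = 2*(k:ℝ)/(((n:ℝ)-(k:ℝ))*r) := by
    rw [e_u]
    rw [div_eq_div_iff]
    · field_simp
      try ring
    · apply ne_of_gt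
      have h2 : 0 < 1 - (k:ℝ)/(n:ℝ) := by
        rw [div_eq_mul_inv]
        nlinarith [mul_pos hninv (show (0:ℝ) < (n:ℝ)-(k:ℝ) by linarith)]
      positivity
    · apply ne_of_gt
      have h2 : 0 < (n:ℝ)-(k:ℝ) := by linarith
      positivity
  have hvpos : 0 < v n := by rw [e_v]; positivity
  have huv1 : 0 < u n - v n := by
    rw [e_u, e_v, div_eq_mul_inv]
    nlinarith [mul_pos hninv (show (0:ℝ) < (k:ℝ)-1 by linarith)]
  have huv2 : 0 < u n - 2*v n := by
    rw [e_u, e_v, div_eq_mul_inv]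
    nlinarith [mul_pos hninv (show (0:ℝ) < (k:ℝ)-2 by linarith)]
  have t3 : r^2*((1-u n+v n)*(1-u n+2*v n))/((u n-2*v n)*(u n-v n))
      = r^2*(((n:ℝ)-(k:ℝ)+1)*(((n:ℝ)-(k:ℝ))+2))/((((k:ℝ)-2)*((k:ℝ)-1))) := by
    rw [div_eq_div_iff (by positivity) (by
      apply ne_of_gt
      have h1 : 0 < (k:ℝ)-2 := by linarith
      have h2 : 0 < (k:ℝ)-1 := by linarith
      positivity : ((k:ℝ)-2)*((k:ℝ)-1) ≠ 0)]
    rw [e_u, e_v]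
    field_simp
    try ring
  have t4 : 2*r*(1-u n+v n)/(u n-v n) = 2*r*(((n:ℝ)-(k:ℝ))+1)/((k:ℝ)-1) := by
    rw [div_eq_div_iff (by positivity) (by
      apply ne_of_gt; linarith : ((k:ℝ)-1) ≠ 0)]
    rw [e_u, e_v]
    field_simp
    try ring
  rw [hG_def]
  simp only
  rw [t1, t2, t3, t4]
  simp only [Aval, Bval, ca, cb]
  ring

lemma delta_bound {C t : ℝ} (hC : 0 ≤ C) (ht : 0 < t) :
    2*(Real.sqrt C + t) + C/(Real.sqrt C + t) ≤ 3*Real.sqrt C + 2*t := by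
  have hs : Real.sqrt C ^ 2 = C := Real.sq_sqrt hC
  have hsn : 0 ≤ Real.sqrt C := Real.sqrt_nonneg C
  have hd : 0 < Real.sqrt C + t := by linarith
  have h1 : C/(Real.sqrt C + t) ≤ Real.sqrt C := by
    rw [div_le_iff₀ hd]
    nlinarith
  linarith

theorem log_average_tendsto_logit
    {Ω : Type*} [MeasureSpace Ω] (P : Measure Ω) [IsProbabilityMeasure P]
    (x : ℝ) (hx : x ∈ Set.Ioo (0 : ℝ) 1) (m : ℕ → ℕ) (hm : ∀ n, 1 ≤ m n)
    (s : ℕ → ℕ → Ω → ℝ)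
    (hindep : ∀ n : ℕ, iIndepFun (s n) P)
    (hlaw : ∀ n : ℕ, 1 ≤ ⌊(n : ℝ) * x⌋₊ → ∀ ℓ < m n,
      Measure.map (s n ℓ) P = (volume : Measure ℝ).withDensity (fun y =>
        if 0 < y then ENNReal.ofReal
          ((n.factorial : ℝ) / (((⌊(n : ℝ) * x⌋₊ - 1).factorial : ℝ) *
              ((n - ⌊(n : ℝ) * x⌋₊).factorial : ℝ)) *
            (y ^ (⌊(n : ℝ) * x⌋₊ - 1) / (1 + y) ^ (n + 1))) else 0)) :
    ∀ ε : ℝ, 0 < ε →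
      Filter.Tendsto
        (fun n : ℕ => P {ω |
          ε < |(1 / (m n : ℝ)) * ∑ ℓ ∈ Finset.range (m n), Real.log (s n ℓ ω) -
            Real.log (x / (1 - x))|})
        Filter.atTop (nhds 0) := by
  obtain ⟨hx0, hx1⟩ := hx
  intro ε hε
  have hx1' : (0:ℝ) < 1 - x := by linarith
  have hr : 0 < x/(1-x) := div_pos hx0 hx1'
  have hrne : x/(1-x) ≠ 0 := ne_of_gt hr
  set r : ℝ := x/(1-x) with hrdef
  set L : ℝ := Real.log r with hLdef
  set Cseq : ℕ → ℝ := fun n => Aval (⌊(n:ℝ)*x⌋₊ - 3) (n - ⌊(n:ℝ)*x⌋₊ - 2) r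
      + Bval (⌊(n:ℝ)*x⌋₊ - 3) (n - ⌊(n:ℝ)*x⌋₊ - 2) r with hCseq_def
  set ρ : ℕ → ℝ := fun n => 3*Real.sqrt (Cseq n) + 2*(1/((n:ℝ)+1)) with hρ_def
  have hρ0 : Tendsto ρ atTop (𝓝 0) := by
    have h1 : Tendsto (fun n => Real.sqrt (Cseq n)) atTop (𝓝 0) := by
      have h := (tendsto_C x hx0 hx1).sqrt
      rw [Real.sqrt_zero] at h
      exact h
    have h2 : Tendsto (fun n : ℕ => 1/((n:ℝ)+1)) atTop (𝓝 0) := by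
      apply Tendsto.div_atTop (tendsto_const_nhds)
      exact tendsto_atTop_add_const_right _ 1 tendsto_natCast_atTop_atTop
    have := (h1.const_mul 3).add (h2.const_mul 2)
    simpa [hρ_def, mul_comm] using this
  have hupper : Tendsto (fun n => ENNReal.ofReal (ρ n) * (ENNReal.ofReal ε)⁻¹)
      atTop (𝓝 0) := by
    have h1 : Tendsto (fun n => ENNReal.ofReal (ρ n)) atTop (𝓝 (ENNReal.ofReal 0)) :=
      ENNReal.tendsto_ofReal hρ0
    rw [ENNReal.ofReal_zero] at h1
    have h2 := ENNReal.Tendsto.mul_const h1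
      (Or.inr (ENNReal.inv_ne_top.mpr (ne_of_gt (ENNReal.ofReal_pos.mpr hε))))
    simpa using h2
  apply tendsto_of_tendsto_of_tendsto_of_le_of_le' tendsto_const_nhds hupper
  · filter_upwards with n
    exact zero_le
  · filter_upwards [regime x hx0 hx1] with n hn
    obtain ⟨h3, hk2, hn1⟩ := hn
    obtain ⟨a, hka⟩ : ∃ a, ⌊(n:ℝ)*x⌋₊ = a + 3 := ⟨⌊(n:ℝ)*x⌋₊ - 3, by omega⟩
    obtain ⟨b, hb⟩ : ∃ b, n = a + b + 5 := ⟨n - ⌊(n:ℝ)*x⌋₊ - 2, by omega⟩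
    -- the law in gbar form
    have hμ : ∀ ℓ < m n, Measure.map (s n ℓ) P
        = (volume : Measure ℝ).withDensity (fun y => ENNReal.ofReal (gbar a b y)) := by
      intro ℓ hℓ
      rw [hlaw n (by omega) ℓ hℓ]
      congr 1
      funext y
      rw [show ⌊(n:ℝ)*x⌋₊ - 1 = a + 2 from by omega,
        show n - ⌊(n:ℝ)*x⌋₊ = b + 2 from by omega,
        show n + 1 = a+b+6 from by omega,
        show n.factorial = (a+b+5).factorial from by rw [hb]]
      unfold gbar cAux
      split_ifs with h
      · rfl
      · rw [ENNReal.ofReal_zero]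
    set gf : ℝ → ℝ≥0∞ := fun y => ENNReal.ofReal (gbar a b y) with hgf_def
    have hgf_meas : Measurable gf := ENNReal.measurable_ofReal.comp (gbar_measurable a b)
    have hlint1 : ∫⁻ y, gf y = 1 := by
      rw [hgf_def]
      rw [← ofReal_integral_eq_lintegral_ofReal (integrable_gbar a b)
        (Eventually.of_forall (gbar_nonneg a b)), integral_gbar, ENNReal.ofReal_one]
    have haem : ∀ ℓ < m n, AEMeasurable (s n ℓ) P := by
      intro ℓ hℓ
      by_contra hc
      have h0 := Measure.map_of_not_aemeasurable hc
      rw [hμ ℓ hℓ] at h0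
      have h1 : (volume : Measure ℝ).withDensity gf univ = 0 := by rw [h0]; rfl
      rw [withDensity_apply _ MeasurableSet.univ, Measure.restrict_univ, hlint1] at h1
      exact one_ne_zero h1
    -- Markov
    have hm0 : (0:ℝ) < (m n : ℝ) := by exact_mod_cast hm n
    have hmE0 : ((m n : ℕ) : ℝ≥0∞) ≠ 0 :=
      Nat.cast_ne_zero.mpr (by have := hm n; omega)
    set f : Ω → ℝ≥0∞ := fun ω => ENNReal.ofReal
      |(1 / (m n : ℝ)) * ∑ ℓ ∈ Finset.range (m n), Real.log (s n ℓ ω) - L| with hf_def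
    have haemf : AEMeasurable f P := by
      apply ENNReal.measurable_ofReal.comp_aemeasurable
      apply (continuous_abs.measurable).comp_aemeasurable
      apply AEMeasurable.sub _ aemeasurable_const
      apply AEMeasurable.const_mul
      apply Finset.aemeasurable_fun_sum
      intro ℓ hℓ
      exact Real.measurable_log.comp_aemeasurable (haem ℓ (Finset.mem_range.mp hℓ))
    have hmarkov := meas_ge_le_lintegral_div haemf
      (ne_of_gt (ENNReal.ofReal_pos.mpr hε)) ENNReal.ofReal_ne_top
    have hsubset : {ω | ε < |(1 / (m n : ℝ)) *
        ∑ ℓ ∈ Finset.range (m n), Real.log (s n ℓ ω) - L|}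
        ⊆ {ω | ENNReal.ofReal ε ≤ f ω} := by
      intro ω h
      exact ENNReal.ofReal_le_ofReal (le_of_lt h)
    set W : ℝ≥0∞ := ∫⁻ y, ENNReal.ofReal |Real.log y - L|
        ∂((volume : Measure ℝ).withDensity gf) with hW_def
    -- Step 2 : ∫⁻ f ≤ W
    have hstep2 : ∫⁻ ω, f ω ∂P ≤ W := by
      have hptw : ∀ ω, f ω ≤ ((m n : ℕ) : ℝ≥0∞)⁻¹ *
          ∑ ℓ ∈ Finset.range (m n), ENNReal.ofReal |Real.log (s n ℓ ω) - L| := by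
        intro ω
        have e1 : (1/(m n:ℝ)) * ∑ ℓ ∈ Finset.range (m n), Real.log (s n ℓ ω) - L
            = (1/(m n:ℝ)) * ∑ ℓ ∈ Finset.range (m n), (Real.log (s n ℓ ω) - L) := by
          rw [Finset.sum_sub_distrib, Finset.sum_const, Finset.card_range, nsmul_eq_mul]
          field_simp
        rw [hf_def]
        simp only
        rw [e1]
        calc ENNReal.ofReal |(1/(m n:ℝ)) * ∑ ℓ ∈ Finset.range (m n),
              (Real.log (s n ℓ ω) - L)|
            ≤ ENNReal.ofReal ((1/(m n:ℝ)) * ∑ ℓ ∈ Finset.range (m n),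
              |Real.log (s n ℓ ω) - L|) := by
              apply ENNReal.ofReal_le_ofReal
              rw [abs_mul, abs_of_pos (by positivity : (0:ℝ) < 1/(m n:ℝ))]
              exact mul_le_mul_of_nonneg_left (Finset.abs_sum_le_sum_abs _ _) (by positivity)
          _ = ((m n : ℕ) : ℝ≥0∞)⁻¹ * ∑ ℓ ∈ Finset.range (m n),
              ENNReal.ofReal |Real.log (s n ℓ ω) - L| := by
              rw [ENNReal.ofReal_mul (by positivity),
                ENNReal.ofReal_sum_of_nonneg (fun i _ => abs_nonneg _)]
              congr 1
              rw [one_div, ENNReal.ofReal_inv_of_pos hm0, ENNReal.ofReal_natCast]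
      calc ∫⁻ ω, f ω ∂P ≤ ∫⁻ ω, ((m n : ℕ) : ℝ≥0∞)⁻¹ *
            ∑ ℓ ∈ Finset.range (m n), ENNReal.ofReal |Real.log (s n ℓ ω) - L| ∂P :=
          lintegral_mono hptw
        _ = ((m n : ℕ) : ℝ≥0∞)⁻¹ * ∫⁻ ω, ∑ ℓ ∈ Finset.range (m n),
            ENNReal.ofReal |Real.log (s n ℓ ω) - L| ∂P :=
          lintegral_const_mul' _ _ (ENNReal.inv_ne_top.mpr hmE0)
        _ = ((m n : ℕ) : ℝ≥0∞)⁻¹ * ∑ ℓ ∈ Finset.range (m n),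
            ∫⁻ ω, ENNReal.ofReal |Real.log (s n ℓ ω) - L| ∂P := by
          rw [lintegral_finset_sum']
          intro ℓ hℓ
          apply ENNReal.measurable_ofReal.comp_aemeasurable
          apply (continuous_abs.measurable).comp_aemeasurable
          exact (Real.measurable_log.comp_aemeasurable
            (haem ℓ (Finset.mem_range.mp hℓ))).sub aemeasurable_const
        _ = ((m n : ℕ) : ℝ≥0∞)⁻¹ * ∑ ℓ ∈ Finset.range (m n), W := by
          congr 1
          apply Finset.sum_congr rfl
          intro ℓ hℓ
          have hmap := lintegral_map'
            (f := fun y => ENNReal.ofReal |Real.log y - L|) (g := s n ℓ)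
            ((ENNReal.measurable_ofReal.comp
              ((continuous_abs.measurable).comp
                (Real.measurable_log.sub measurable_const))).aemeasurable)
            (haem ℓ (Finset.mem_range.mp hℓ))
          rw [hW_def, ← hμ ℓ (Finset.mem_range.mp hℓ), hmap]
        _ = W := by
          rw [Finset.sum_const, Finset.card_range, nsmul_eq_mul, ← mul_assoc,
            ENNReal.inv_mul_cancel hmE0 (ENNReal.natCast_ne_top _), one_mul]
    -- Step 3 : W ≤ ofReal (ρ n)
    have hCab : Cseq n = Aval a b r + Bval a b r := by
      rw [hCseq_def]
      simp only [show ⌊(n:ℝ)*x⌋₊ - 3 = a from by omega,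
        show n - ⌊(n:ℝ)*x⌋₊ - 2 = b from by omega]
    have hC0 : 0 ≤ Cseq n := by
      rw [hCab]
      exact add_nonneg (Aval_nonneg a b hrne) (Bval_nonneg a b hrne)
    set δ : ℝ := Real.sqrt (Cseq n) + 1/((n:ℝ)+1) with hδ_def
    have hδ : 0 < δ := by
      have := Real.sqrt_nonneg (Cseq n)
      have : (0:ℝ) < 1/((n:ℝ)+1) := by positivity
      positivity
    set ψ : ℝ → ℝ := fun y => 2*δ + ((y/r-1)^2 + (r/y-1)^2)/δ with hψ_def
    have hψ0 : ∀ y, 0 ≤ ψ y := by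
      intro y
      rw [hψ_def]
      positivity
    have hstep3 : W ≤ ENNReal.ofReal (ρ n) := by
      have hWmul : W = ∫⁻ y, (gf * fun y => ENNReal.ofReal |Real.log y - L|) y := by
        rw [hW_def]
        exact lintegral_withDensity_eq_lintegral_mul volume hgf_meas
          (ENNReal.measurable_ofReal.comp
            ((continuous_abs.measurable).comp (Real.measurable_log.sub measurable_const)))
      have hptw2 : ∀ y, (gf * fun y => ENNReal.ofReal |Real.log y - L|) y
          ≤ ENNReal.ofReal (ψ y * gbar a b y) := by
        intro y
        simp only [Pi.mul_apply, hgf_def]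
        by_cases hy : 0 < y
        · rw [mul_comm, ENNReal.ofReal_mul (hψ0 y)]
          apply mul_le_mul_left
          apply ENNReal.ofReal_le_ofReal
          rw [hψ_def, hLdef]
          exact log_abs_bound hr hy hδ
        · have : gbar a b y = 0 := by rw [gbar, if_neg hy]
          rw [this, ENNReal.ofReal_zero, zero_mul, mul_zero]
          exact zero_le
      have hint : Integrable (fun y => ψ y * gbar a b y) := by
        have h1 := (integrable_gbar a b).const_mul (2*δ)
        have h2 := (integrable_A_gbar a b hrne).const_mul (1/δ)
        have h3 := (integrable_B_gbar a b hrne).const_mul (1/δ)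
        apply ((h1.add h2).add h3).congr
        apply ae_of_all
        intro y
        rw [hψ_def]
        simp only [Pi.add_apply]
        ring
      have hintval : ∫ y, ψ y * gbar a b y = 2*δ + (Aval a b r + Bval a b r)/δ := by
        have h1 : Integrable (fun y => 2*δ * gbar a b y) :=
          (integrable_gbar a b).const_mul (2*δ)
        have h2 : Integrable (fun y => (1/δ) * ((y/r-1)^2 * gbar a b y)) :=
          (integrable_A_gbar a b hrne).const_mul (1/δ)
        have h3 : Integrable (fun y => (1/δ) * ((r/y-1)^2 * gbar a b y)) :=
          (integrable_B_gbar a b hrne).const_mul (1/δ)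
        have heq : (fun y => ψ y * gbar a b y) = fun y =>
            (2*δ * gbar a b y + (1/δ) * ((y/r-1)^2 * gbar a b y))
              + (1/δ) * ((r/y-1)^2 * gbar a b y) := by
          funext y
          rw [hψ_def]
          simp only
          field_simp
          ring
        have h12 : Integrable (fun y => 2*δ * gbar a b y
            + (1/δ) * ((y/r-1)^2 * gbar a b y)) := h1.add h2
        rw [heq, integral_add h12 h3, integral_add h1 h2,
          integral_const_mul, integral_const_mul, integral_const_mul,
          integral_gbar, integral_A_gbar a b hrne, integral_B_gbar a b hrne]
        field_simp
        ring
      calc W = ∫⁻ y, (gf * fun y => ENNReal.ofReal |Real.log y - L|) y := hWmul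
        _ ≤ ∫⁻ y, ENNReal.ofReal (ψ y * gbar a b y) := lintegral_mono hptw2
        _ = ENNReal.ofReal (∫ y, ψ y * gbar a b y) := by
          rw [← ofReal_integral_eq_lintegral_ofReal hint
            (ae_of_all _ (fun y => mul_nonneg (hψ0 y) (gbar_nonneg a b y)))]
        _ ≤ ENNReal.ofReal (ρ n) := by
          apply ENNReal.ofReal_le_ofReal
          rw [hintval, hρ_def]
          simp only
          have hdb := delta_bound hC0 (by positivity : (0:ℝ) < 1/((n:ℝ)+1))
          rw [hδ_def, ← hCab]
          linarith [hdb]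
    -- combine
    calc P {ω | ε < |(1 / (m n : ℝ)) *
          ∑ ℓ ∈ Finset.range (m n), Real.log (s n ℓ ω) - L|}
        ≤ P {ω | ENNReal.ofReal ε ≤ f ω} := measure_mono hsubset
      _ ≤ (∫⁻ ω, f ω ∂P) / ENNReal.ofReal ε := hmarkov
      _ ≤ W / ENNReal.ofReal ε := by
          apply ENNReal.div_le_div_right hstep2
      _ ≤ ENNReal.ofReal (ρ n) * (ENNReal.ofReal ε)⁻¹ := by
          rw [div_eq_mul_inv]
          exact mul_le_mul_left hstep3 _
end

section
/- Fix r > 0 and set x = r²/(1+r²), so x ∈ (0,1) and r² = x/(1-x). Suppose for each n, Y_1, …, Y_n are random variables whose CDFs are pointwise decreasing in j, and suppose that for every y ∈ (0,1), log(Y_{⌊ny⌋}) → log(y/(1-y)) in probability. Then G_n(r) := (1/n) Σ_{j=1}^n P(Y_j ≤ r²) → r²/(1+r²) as n → ∞. -/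
open MeasureTheory

set_option maxHeartbeats 1000000

theorem Gn_tendsto
    {Ω : Type*} [MeasureSpace Ω] (P : Measure Ω) [IsProbabilityMeasure P]
    (r : ℝ) (hr : 0 < r) (Y : ℕ → ℕ → Ω → ℝ)
    (hpos : ∀ n j ω, 0 < Y n j ω)
    (hmono : ∀ n : ℕ, ∀ t : ℝ, 0 ≤ t → ∀ j : ℕ, 1 ≤ j → j < n →
      P {ω | Y n (j + 1) ω ≤ t} ≤ P {ω | Y n j ω ≤ t})
    (hconv : ∀ y : ℝ, y ∈ Set.Ioo (0 : ℝ) 1 → ∀ ε : ℝ, 0 < ε →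
      Filter.Tendsto
        (fun n : ℕ => P {ω |
          ε < |Real.log (Y n ⌊(n : ℝ) * y⌋₊ ω) - Real.log (y / (1 - y))|})
        Filter.atTop (nhds 0)) :
    Filter.Tendsto
      (fun n : ℕ => (1 / (n : ℝ)) * ∑ j ∈ Finset.Icc 1 n, (P {ω | Y n j ω ≤ r ^ 2}).toReal)
      Filter.atTop (nhds (r ^ 2 / (1 + r ^ 2))) := by
  set p : ℕ → ℕ → ℝ := fun n j => (P {ω | Y n j ω ≤ r ^ 2}).toReal with hp
  have hr2 : (0:ℝ) < r ^ 2 := by positivity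
  set x : ℝ := r ^ 2 / (1 + r ^ 2) with hxdef
  have hx0 : 0 < x := by positivity
  have hx1 : x < 1 := by
    rw [hxdef, div_lt_one (by positivity)]; linarith
  have hxr : x / (1 - x) = r ^ 2 := by
    rw [hxdef]; field_simp; ring
  -- antitonicity of p in j
  have hanti : ∀ n i j : ℕ, 1 ≤ i → i ≤ j → j ≤ n → p n j ≤ p n i := by
    intro n i j h1 hij
    induction j, hij using Nat.le_induction with
    | base => intro _; exact le_rfl
    | succ j hij ih =>
      intro hjn
      have h1j : p n (j+1) ≤ p n j := by
        apply ENNReal.toReal_mono (measure_ne_top _ _)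
        exact hmono n (r^2) hr2.le j (le_trans h1 hij) (by omega)
      exact h1j.trans (ih (by omega))
  have hple1 : ∀ n j, p n j ≤ 1 := by
    intro n j
    have := prob_le_one (μ := P) (s := {ω | Y n j ω ≤ r ^ 2})
    simpa using ENNReal.toReal_mono ENNReal.one_ne_top this
  have hpnn : ∀ n j, 0 ≤ p n j := fun n j => ENNReal.toReal_nonneg
  clear_value p
  rw [Metric.tendsto_nhds]
  intro ε hε
  set ε0 : ℝ := min ε 1 with hε0def
  have hε0 : 0 < ε0 := lt_min hε zero_lt_one
  have hε01 : ε0 ≤ 1 := min_le_right _ _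
  have hε0ε : ε0 ≤ ε := min_le_left _ _
  -- choose a < x < b
  set a : ℝ := x - min (ε0/2) (x/2) with hadef
  set b : ℝ := x + min (ε0/2) ((1-x)/2) with hbdef
  have hmina : 0 < min (ε0/2) (x/2) := lt_min (by linarith) (by linarith)
  have hminb : 0 < min (ε0/2) ((1-x)/2) := lt_min (by linarith) (by linarith)
  have ha0 : 0 < a := by
    have : min (ε0/2) (x/2) ≤ x/2 := min_le_right _ _
    rw [hadef]; linarith
  have hax : a < x := by rw [hadef]; linarith
  have ha1 : a < 1 := hax.trans hx1
  have hxa : x - ε0/2 ≤ a := by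
    have : min (ε0/2) (x/2) ≤ ε0/2 := min_le_left _ _
    rw [hadef]; linarith
  have hxb : x < b := by rw [hbdef]; linarith
  have hb1 : b < 1 := by
    have : min (ε0/2) ((1-x)/2) ≤ (1-x)/2 := min_le_right _ _
    rw [hbdef]; linarith
  have hbx : b ≤ x + ε0/2 := by
    have : min (ε0/2) ((1-x)/2) ≤ ε0/2 := min_le_left _ _
    rw [hbdef]; linarith
  have hb0 : 0 < b := hx0.trans hxb
  clear_value x ε0 a b
  -- target values
  have hta0 : 0 < a / (1 - a) := div_pos ha0 (by linarith)
  have htb0 : 0 < b / (1 - b) := div_pos hb0 (by linarith)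
  have hta : a / (1 - a) < r ^ 2 := by
    rw [← hxr, div_lt_div_iff₀ (by linarith) (by linarith)]
    nlinarith
  have htb : r ^ 2 < b / (1 - b) := by
    rw [← hxr, div_lt_div_iff₀ (by linarith) (by linarith)]
    nlinarith
  set δa : ℝ := Real.log (r^2) - Real.log (a/(1-a)) with hδadef
  set δb : ℝ := Real.log (b/(1-b)) - Real.log (r^2) with hδbdef
  have hδa : 0 < δa := by
    have := Real.log_lt_log hta0 hta
    rw [hδadef]; linarith
  have hδb : 0 < δb := by
    have := Real.log_lt_log hr2 htb
    rw [hδbdef]; linarith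
  clear_value δa δb
  -- convergence facts
  have hconva := hconv a ⟨ha0, ha1⟩ (δa/2) (half_pos hδa)
  have hconvb := hconv b ⟨hb0, hb1⟩ (δb/2) (half_pos hδb)
  have hconva' : Filter.Tendsto
      (fun n : ℕ => (P {ω | δa/2 < (|Real.log (Y n ⌊(n : ℝ) * a⌋₊ ω) - Real.log (a / (1 - a))|)}).toReal)
      Filter.atTop (nhds 0) := by
    have := (ENNReal.tendsto_toReal (a := 0) (by simp)).comp hconva
    simpa [Function.comp_def] using this
  have hconvb' : Filter.Tendsto
      (fun n : ℕ => (P {ω | δb/2 < (|Real.log (Y n ⌊(n : ℝ) * b⌋₊ ω) - Real.log (b / (1 - b))|)}).toReal)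
      Filter.atTop (nhds 0) := by
    have := (ENNReal.tendsto_toReal (a := 0) (by simp)).comp hconvb
    simpa [Function.comp_def] using this
  have ev1 := hconva'.eventually_lt_const (show (0:ℝ) < ε0/8 by linarith)
  have ev2 := hconvb'.eventually_lt_const (show (0:ℝ) < ε0/8 by linarith)
  have ev3 : ∀ᶠ n : ℕ in Filter.atTop, (1:ℝ) ≤ (n:ℝ) * a := by
    have h := (Filter.Tendsto.atTop_mul_const ha0 (tendsto_natCast_atTop_atTop (R := ℝ)))
    exact h.eventually_ge_atTop 1
  have ev4 : ∀ᶠ n : ℕ in Filter.atTop, (8:ℝ) ≤ (n:ℝ) * ε0 := by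
    have h := (Filter.Tendsto.atTop_mul_const hε0 (tendsto_natCast_atTop_atTop (R := ℝ)))
    exact h.eventually_ge_atTop 8
  have ev5 : ∀ᶠ n : ℕ in Filter.atTop, 1 ≤ n := Filter.eventually_ge_atTop 1
  filter_upwards [ev1, ev2, ev3, ev4, ev5] with n h1 h2 h3 h4 h5
  have hn0 : (0:ℝ) < (n:ℝ) := by exact_mod_cast h5
  set k : ℕ := ⌊(n : ℝ) * a⌋₊ with hkdef
  set m : ℕ := ⌊(n : ℝ) * b⌋₊ with hmdef
  have hk1 : 1 ≤ k := Nat.le_floor (by exact_mod_cast h3)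
  have hkle : (k:ℝ) ≤ (n:ℝ) * a := Nat.floor_le (mul_nonneg hn0.le ha0.le)
  have hkn : k ≤ n := by
    have h' : (n:ℝ) * a < (n:ℝ) * 1 := mul_lt_mul_of_pos_left ha1 hn0
    have : (k:ℝ) ≤ (n:ℝ) := by rw [mul_one] at h'; linarith
    exact_mod_cast this
  have hm1 : 1 ≤ m := Nat.le_floor (by
    have h' : (n:ℝ) * a ≤ (n:ℝ) * b := mul_le_mul_of_nonneg_left (by linarith) hn0.le
    push_cast; linarith)
  have hmle : (m:ℝ) ≤ (n:ℝ) * b := Nat.floor_le (mul_nonneg hn0.le hb0.le)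
  have hmn : m ≤ n := by
    have h' : (n:ℝ) * b < (n:ℝ) * 1 := mul_lt_mul_of_pos_left hb1 hn0
    have : (m:ℝ) ≤ (n:ℝ) := by rw [mul_one] at h'; linarith
    exact_mod_cast this
  have hk_lb : (n:ℝ) * a - 1 < (k:ℝ) := Nat.sub_one_lt_floor _
  clear_value k m
  -- lower bound on p n k
  have hpk : 1 - ε0/8 ≤ p n k := by
    have hsub : Set.univ ⊆ {ω | Y n k ω ≤ r ^ 2} ∪
        {ω | δa/2 < (|Real.log (Y n k ω) - Real.log (a / (1 - a))|)} := by
      intro ω _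
      by_cases h : Y n k ω ≤ r ^ 2
      · exact Or.inl h
      · push_neg at h
        have hlog : Real.log (r^2) < Real.log (Y n k ω) := Real.log_lt_log hr2 h
        have hd : δa < Real.log (Y n k ω) - Real.log (a/(1-a)) := by
          linarith [hδadef]
        have : δa/2 < (|Real.log (Y n k ω) - Real.log (a/(1-a))|) :=
          (((half_lt_self hδa).trans hd).trans_le (le_abs_self _))
        exact Or.inr this
    have hle : (1:ENNReal) ≤ P {ω | Y n k ω ≤ r ^ 2} +
        P {ω | δa/2 < (|Real.log (Y n k ω) - Real.log (a / (1 - a))|)} := by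
      calc (1:ENNReal) = P Set.univ := (measure_univ).symm
        _ ≤ P ({ω | Y n k ω ≤ r ^ 2} ∪ _) := measure_mono hsub
        _ ≤ _ := measure_union_le _ _
    have hle' := ENNReal.toReal_mono
      (ENNReal.add_ne_top.2 ⟨measure_ne_top _ _, measure_ne_top _ _⟩) hle
    rw [ENNReal.toReal_one, ENNReal.toReal_add (measure_ne_top _ _) (measure_ne_top _ _)] at hle'
    have : (P {ω | δa/2 < (|Real.log (Y n k ω) - Real.log (a / (1 - a))|)}).toReal < ε0/8 := h1
    rw [hp]; linarith
  -- upper bound on p n m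
  have hpm : p n m ≤ ε0/8 := by
    have hsub : {ω | Y n m ω ≤ r ^ 2} ⊆
        {ω | δb/2 < (|Real.log (Y n m ω) - Real.log (b / (1 - b))|)} := by
      intro ω h
      have hY := hpos n m ω
      have hlog : Real.log (Y n m ω) ≤ Real.log (r^2) :=
        Real.log_le_log hY h
      have hd : δb ≤ Real.log (b/(1-b)) - Real.log (Y n m ω) := by
        linarith [hδbdef]
      have habs : Real.log (b/(1-b)) - Real.log (Y n m ω) ≤
          |Real.log (Y n m ω) - Real.log (b/(1-b))| := by
        rw [abs_sub_comm]; exact le_abs_self _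
      have : δb/2 < (|Real.log (Y n m ω) - Real.log (b/(1-b))|) :=
        (half_lt_self hδb).trans_le (hd.trans habs)
      exact this
    have := ENNReal.toReal_mono (measure_ne_top P _) (measure_mono (μ := P) hsub)
    rw [hp]; linarith [h2, this]
  -- sum bounds
  set S : ℝ := ∑ j ∈ Finset.Icc 1 n, p n j with hSdef
  clear_value S
  have hS_lb : ((n:ℝ) * a - 1) * (1 - ε0/8) ≤ S := by
    have step1 : (k:ℝ) * p n k ≤ S := by
      calc (k:ℝ) * p n k = ∑ _j ∈ Finset.Icc 1 k, p n k := by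
            rw [Finset.sum_const, Nat.card_Icc]
            simp [nsmul_eq_mul]
        _ ≤ ∑ j ∈ Finset.Icc 1 k, p n j := by
            apply Finset.sum_le_sum
            intro j hj
            rw [Finset.mem_Icc] at hj
            exact hanti n j k hj.1 hj.2 hkn
        _ ≤ S := by
            rw [hSdef]
            apply Finset.sum_le_sum_of_subset_of_nonneg
              (Finset.Icc_subset_Icc_right hkn)
            intro j _ _; exact hpnn n j
    have step2 : (k:ℝ) * (1 - ε0/8) ≤ (k:ℝ) * p n k :=
      mul_le_mul_of_nonneg_left hpk (by positivity)
    have step3 : ((n:ℝ) * a - 1) * (1 - ε0/8) ≤ (k:ℝ) * (1 - ε0/8) :=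
      mul_le_mul_of_nonneg_right hk_lb.le (by linarith)
    linarith
  have hS_ub : S ≤ (m:ℝ) + (n:ℝ) * (ε0/8) := by
    have e1 : Finset.Icc 1 n = Finset.Ioc 0 n := by rw [← Finset.Icc_add_one_left_eq_Ioc]; rfl
    have e2 : Finset.Icc 1 m = Finset.Ioc 0 m := by rw [← Finset.Icc_add_one_left_eq_Ioc]; rfl
    have hsplit : S = ∑ j ∈ Finset.Ioc 0 m, p n j + ∑ j ∈ Finset.Ioc m n, p n j := by
      rw [hSdef, e1, Finset.sum_Ioc_consecutive _ (Nat.zero_le m) hmn]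
    have hfirst : ∑ j ∈ Finset.Ioc 0 m, p n j ≤ (m:ℝ) := by
      calc ∑ j ∈ Finset.Ioc 0 m, p n j ≤ ∑ _j ∈ Finset.Ioc 0 m, (1:ℝ) :=
            Finset.sum_le_sum (fun j _ => hple1 n j)
        _ = (m:ℝ) := by rw [Finset.sum_const, Nat.card_Ioc, Nat.sub_zero, nsmul_eq_mul, mul_one]
    have hsecond : ∑ j ∈ Finset.Ioc m n, p n j ≤ (n:ℝ) * (ε0/8) := by
      calc ∑ j ∈ Finset.Ioc m n, p n j ≤ ∑ _j ∈ Finset.Ioc m n, p n m := by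
            apply Finset.sum_le_sum
            intro j hj
            rw [Finset.mem_Ioc] at hj
            exact hanti n m j hm1 hj.1.le hj.2
        _ = ((n - m : ℕ):ℝ) * p n m := by
            rw [Finset.sum_const, Nat.card_Ioc]; simp [nsmul_eq_mul]
        _ ≤ (n:ℝ) * (ε0/8) := by
            have h1' : ((n - m : ℕ):ℝ) ≤ (n:ℝ) := by exact_mod_cast Nat.sub_le n m
            have := hpnn n m
            nlinarith
    linarith
  -- conclude
  have hgoal : (1 / (n:ℝ)) * ∑ j ∈ Finset.Icc 1 n, (P {ω | Y n j ω ≤ r ^ 2}).toReal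
      = (1 / (n:ℝ)) * S := by
    rw [hSdef, hp]
  rw [Real.dist_eq, hgoal]
  have key : |(1 / (n:ℝ)) * S - x| < ε0 := by
    have hfrac : (1 / (n:ℝ)) * S = S / n := one_div_mul_eq_div _ _
    have hlow : x - ε0 < S / n := by
      rw [lt_div_iff₀ hn0]
      nlinarith [mul_le_mul_of_nonneg_left hxa hn0.le,
        mul_le_mul_of_nonneg_left ha1.le (mul_nonneg hn0.le hε0.le)]
    have hhigh : S / n < x + ε0 := by
      rw [div_lt_iff₀ hn0]
      nlinarith [mul_le_mul_of_nonneg_left hbx hn0.le]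
    rw [abs_lt, hfrac]
    constructor <;> linarith
  exact lt_of_lt_of_le key hε0ε
end
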